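/- arXiv:1207.4624 — 3 statements merged into one kernel-verified Lean document; each statement's English description precedes it below -/
import Mathlib

section
/- A bounded holomorphic function on the open unit disc that is not identically zero has nonzero radial boundary values almost everywhere on the unit circle; consequently its boundary function cannot vanish on a set of positive measure on the circle. -/
open MeasureTheory Filter Complex Metric

noncomputable section

open Real Set

def Complex.abs : AbsoluteValue ℂ ℝ := NormedField.toAbsoluteValue ℂ

@[simp] lemma Complex.abs_apply_norm (z : ℂ) : Complex.abs z = ‖z‖ := rfl

lemma Complex.abs_exp (z : ℂ) : Complex.abs (Complex.exp z) = Real.exp z.re := Complex.norm_exp z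

lemma Complex.continuous_abs : Continuous Complex.abs := continuous_norm

lemma Complex.abs_conj (z : ℂ) : Complex.abs ((starRingEnd ℂ) z) = Complex.abs z := Complex.norm_conj z

lemma Complex.abs_ofReal (x : ℝ) : Complex.abs (x : ℂ) = |x| := Complex.norm_real x

lemma Complex.normSq_eq_abs (z : ℂ) : Complex.normSq z = Complex.abs z ^ 2 := Complex.normSq_eq_norm_sq z

lemma Complex.abs_re_le_abs (z : ℂ) : |z.re| ≤ Complex.abs z := Complex.abs_re_le_norm z

lemma abs_mul_exp (x θ : ℝ) : Complex.abs ((x:ℂ) * Complex.exp (θ * Complex.I)) = |x| := by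
  simp [Complex.abs_exp]

lemma cont_path (x : ℝ) : Continuous (fun θ : ℝ => (x:ℂ) * Complex.exp (θ * Complex.I)) := by
  fun_prop

/-- derivative of log ‖G y‖ for a nonvanishing ℝ→ℂ function -/

lemma hasDerivAt_log_abs {G : ℝ → ℂ} {G' : ℂ} {x : ℝ} (hG : HasDerivAt G G' x)
    (hne : G x ≠ 0) :
    HasDerivAt (fun y => Real.log (Complex.abs (G y))) ((G' / G x).re) x := by
  have hre : HasDerivAt (fun y => (G y).re) G'.re x :=
    (Complex.reCLM.hasFDerivAt.comp_hasDerivAt x hG)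
  have him : HasDerivAt (fun y => (G y).im) G'.im x :=
    (Complex.imCLM.hasFDerivAt.comp_hasDerivAt x hG)
  have h1 : HasDerivAt (fun y => Complex.normSq (G y))
      (G'.re * (G x).re + (G x).re * G'.re + (G'.im * (G x).im + (G x).im * G'.im)) x := by
    have := (hre.mul hre).add (him.mul him)
    exact this.congr_of_eventuallyEq (Eventually.of_forall fun y => by simp [Complex.normSq_apply])
  have hns : Complex.normSq (G x) ≠ 0 := by
    simpa [Complex.normSq_eq_zero] using hne
  have h2 := (Real.hasDerivAt_log hns).comp x h1
  have funeq : (fun y => Real.log (Complex.abs (G y)))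
      = fun y => (1/2) * Real.log (Complex.normSq (G y)) := by
    funext y
    rw [Complex.normSq_eq_abs, Real.log_pow]
    push_cast; ring
  rw [funeq]
  have h3 := h2.const_mul (1/2 : ℝ)
  refine h3.congr_deriv ?_
  rw [Complex.div_re]
  field_simp
  ring

lemma cont_logabs_circle {g : ℂ → ℂ} {R : ℝ} (hg : DifferentiableOn ℂ g (ball 0 R))
    (hnz : ∀ z ∈ ball (0:ℂ) R, g z ≠ 0) {x : ℝ} (hx : |x| < R) :
    Continuous (fun θ : ℝ => Real.log (Complex.abs (g ((x:ℂ) * Complex.exp (θ * Complex.I))))) := by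
  have hpath : Continuous (fun θ : ℝ => (x:ℂ) * Complex.exp (θ * Complex.I)) := by fun_prop
  have hmem : ∀ θ : ℝ, (x:ℂ) * Complex.exp (θ * Complex.I) ∈ ball (0:ℂ) R := by
    intro θ
    simpa [mem_ball, Complex.dist_eq, Complex.abs_exp] using hx
  have hgc : Continuous (fun θ : ℝ => g ((x:ℂ) * Complex.exp (θ * Complex.I))) :=
    (hg.continuousOn.comp_continuous hpath hmem)
  rw [continuous_iff_continuousAt]
  intro θ
  exact (Real.continuousAt_log (by simpa using hnz _ (hmem θ))).comp
    ((Complex.continuous_abs.continuousAt).comp hgc.continuousAt)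

theorem logAbsMVP {g : ℂ → ℂ} {R s : ℝ} (hg : DifferentiableOn ℂ g (ball 0 R))
    (hnz : ∀ z ∈ ball (0:ℂ) R, g z ≠ 0) (hs0 : 0 < s) (hsR : s < R) :
    ∫ θ in (0:ℝ)..(2*π), Real.log (Complex.abs (g ((s:ℂ) * Complex.exp (θ * Complex.I))))
      = 2*π * Real.log (Complex.abs (g 0)) := by
  have hR0 : (0:ℝ) < R := hs0.trans hsR
  set q : ℂ → ℂ := fun z => deriv g z / g z with hq_def
  have hganal : AnalyticOnNhd ℂ g (ball 0 R) := hg.analyticOnNhd isOpen_ball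
  have hq : DifferentiableOn ℂ q (ball 0 R) :=
    (hganal.deriv.differentiableOn).div hg hnz
  set F : ℝ → ℝ := fun r => ∫ θ in (0:ℝ)..(2*π),
    Real.log (Complex.abs (g ((r:ℂ) * Complex.exp (θ * Complex.I)))) with hF_def
  -- each circle integral of q vanishes
  have hcirc : ∀ r : ℝ, 0 < r → r < R →
      (∫ θ in (0:ℝ)..(2*π), Complex.exp (θ * Complex.I) * q ((r:ℂ) * Complex.exp (θ * Complex.I))) = 0 := by
    clear_value q
    subst hq_def
    intro r hr hrR
    set q : ℂ → ℂ := fun z => deriv g z / g z with hq_def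
    have hzero : (∮ z in C(0, r), q z) = 0 :=
      circleIntegral_eq_zero_of_differentiable_on_off_countable hr.le Set.countable_empty
        (hq.continuousOn.mono (closedBall_subset_ball hrR))
        (fun z hz => hq.differentiableAt (isOpen_ball.mem_nhds (ball_subset_ball hrR.le hz.1)))
    rw [circleIntegral] at hzero
    simp only [deriv_circleMap, circleMap, zero_add, smul_eq_mul] at hzero
    have hrw : ∀ θ : ℝ, (↑r * Complex.exp (↑θ * Complex.I) * Complex.I) * q (↑r * Complex.exp (↑θ * Complex.I))
        = ((r:ℂ) * Complex.I) * (Complex.exp (↑θ * Complex.I) * q (↑r * Complex.exp (↑θ * Complex.I))) := by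
      intro θ; ring
    rw [intervalIntegral.integral_congr (fun θ _ => hrw θ)] at hzero
    rw [intervalIntegral.integral_const_mul] at hzero
    rcases mul_eq_zero.mp hzero with h | h
    · exact absurd h (by simp [Complex.ext_iff]; intro h'; exact absurd h' hr.ne')
    · exact h

  -- derivative of F is zero
  have hF' : ∀ r : ℝ, 0 < r → r < R → HasDerivAt F 0 r := by
    rw [hF_def]
    intro r hr hrR
    set b : ℝ := (r + R)/2 with hb_def
    have hrb : r < b := by rw [hb_def]; linarith
    have hbR : b < R := by rw [hb_def]; linarith
    set ε : ℝ := b - r with hε_def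
    have hε0 : 0 < ε := by rw [hε_def]; linarith
    obtain ⟨K, hK⟩ := (isCompact_closedBall (0:ℂ) b).exists_bound_of_continuousOn
      (hq.continuousOn.mono (closedBall_subset_ball hbR))
    set F' : ℝ → ℝ → ℝ := fun x θ =>
      (Complex.exp (θ*Complex.I) * q ((x:ℂ) * Complex.exp (θ*Complex.I))).re with hF'_def
    have habs : ∀ x : ℝ, x ∈ ball r ε → |x| ≤ b := by
      intro x hx
      rw [mem_ball, Real.dist_eq] at hx
      have h1 := abs_sub_abs_le_abs_sub x r
      rw [abs_of_pos hr] at h1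
      linarith
    have habsR : ∀ x : ℝ, x ∈ ball r ε → |x| < R := fun x hx => lt_of_le_of_lt (habs x hx) hbR
    have hmemball : ∀ (x : ℝ) (θ : ℝ), |x| < R → (x:ℂ) * Complex.exp (θ*Complex.I) ∈ ball (0:ℂ) R := by
      intro x θ hx; simpa [mem_ball, Complex.dist_eq, abs_mul_exp] using hx
    have key := intervalIntegral.hasDerivAt_integral_of_dominated_loc_of_deriv_le
      (F := fun (x:ℝ) (θ:ℝ) => Real.log (Complex.abs (g ((x:ℂ) * Complex.exp (θ * Complex.I)))))
      (F' := F') (x₀ := r) (a := 0) (b := 2*π) (bound := fun _ => |K|) (μ := volume) (Metric.ball_mem_nhds r hε0)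
      ?_ ?_ ?_ ?_ ?_ ?_
    · have h0 : (∫ θ in (0:ℝ)..(2*π), F' r θ) = 0 := by
        have hqc : Continuous (fun θ : ℝ => Complex.exp (θ*Complex.I) * q ((r:ℂ) * Complex.exp (θ*Complex.I))) := by
          have h1 : Continuous (fun θ : ℝ => q ((r:ℂ) * Complex.exp (θ*Complex.I))) :=
            hq.continuousOn.comp_continuous (cont_path r)
              (fun θ => hmemball r θ (by rwa [abs_of_pos hr]))
          exact (Continuous.mul (by fun_prop) h1)
        have hInt : IntervalIntegrable (fun θ : ℝ => Complex.exp (θ*Complex.I) * q ((r:ℂ) * Complex.exp (θ*Complex.I))) volume 0 (2*π) :=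
          hqc.intervalIntegrable _ _
        have := Complex.reCLM.intervalIntegral_comp_comm hInt
        simp only [Complex.reCLM_apply] at this
        rw [hF'_def]
        simp only []
        rw [this, hcirc r hr hrR]
        simp
      rw [h0] at key
      exact key.2
    · filter_upwards [Metric.ball_mem_nhds r hε0] with x hx
      exact ((cont_logabs_circle hg hnz (habsR x hx)).aestronglyMeasurable).restrict
    · exact (cont_logabs_circle hg hnz (by rwa [abs_of_pos hr])).intervalIntegrable _ _
    · have h1 : Continuous (F' r) := by
        have h2 : Continuous (fun θ : ℝ => q ((r:ℂ) * Complex.exp (θ*Complex.I))) :=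
          hq.continuousOn.comp_continuous (cont_path r)
            (fun θ => hmemball r θ (by rwa [abs_of_pos hr]))
        exact Complex.continuous_re.comp ((Continuous.mul (by fun_prop) h2))
      exact h1.aestronglyMeasurable.restrict
    · refine Filter.Eventually.of_forall (fun θ _ x hx => ?_)
      have hmem : (x:ℂ) * Complex.exp (θ*Complex.I) ∈ closedBall (0:ℂ) b := by
        simp [Complex.dist_eq, abs_mul_exp, habs x hx]
      calc ‖F' x θ‖ = |(Complex.exp (θ*Complex.I) * q ((x:ℂ) * Complex.exp (θ*Complex.I))).re| := rfl
        _ ≤ Complex.abs (Complex.exp (θ*Complex.I) * q ((x:ℂ) * Complex.exp (θ*Complex.I))) :=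
            Complex.abs_re_le_abs _
        _ = Complex.abs (q ((x:ℂ) * Complex.exp (θ*Complex.I))) := by
            rw [map_mul, Complex.abs_exp]; simp
        _ ≤ K := hK _ hmem
        _ ≤ |K| := le_abs_self K
    · exact intervalIntegrable_const
    · refine Filter.Eventually.of_forall (fun θ _ x hx => ?_)
      have hxball : (x:ℂ) * Complex.exp (θ*Complex.I) ∈ ball (0:ℂ) R := hmemball x θ (habsR x hx)
      have hmul : HasDerivAt (fun w : ℂ => w * Complex.exp (θ*Complex.I)) (Complex.exp (θ*Complex.I)) (x:ℂ) := by
        simpa using (hasDerivAt_id ((x:ℂ))).mul_const (Complex.exp (θ*Complex.I))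
      have hgd : HasDerivAt g (deriv g ((x:ℂ) * Complex.exp (θ*Complex.I))) ((x:ℂ) * Complex.exp (θ*Complex.I)) :=
        (hg.differentiableAt (isOpen_ball.mem_nhds hxball)).hasDerivAt
      have hcomp : HasDerivAt (fun w : ℂ => g (w * Complex.exp (θ*Complex.I)))
          (deriv g ((x:ℂ) * Complex.exp (θ*Complex.I)) * Complex.exp (θ*Complex.I)) (x:ℂ) :=
        HasDerivAt.comp _ hgd hmul
      have hcomp2 : HasDerivAt (fun y : ℝ => g ((y:ℂ) * Complex.exp (θ*Complex.I)))
          (deriv g ((x:ℂ) * Complex.exp (θ*Complex.I)) * Complex.exp (θ*Complex.I)) x :=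
        hcomp.comp_ofReal
      have hlog := hasDerivAt_log_abs hcomp2 (hnz _ hxball)
      refine hlog.congr_deriv ?_
      symm
      rw [hF'_def]
      congr 1
      rw [hq_def]
      ring

  -- F is constant on (0, R)
  have hFconst : ∀ r : ℝ, 0 < r → r ≤ s → F r = F s := by
    intro r hr hrs
    have h := intervalIntegral.integral_eq_sub_of_hasDerivAt (f := F) (f' := fun _ => 0)
      (a := r) (b := s) (fun x hx => by
        rw [Set.uIcc_of_le hrs] at hx
        exact hF' x (lt_of_lt_of_le hr hx.1) (lt_of_le_of_lt hx.2 hsR))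
      intervalIntegrable_const
    simp only [intervalIntegral.integral_zero] at h
    linarith [h]
  -- limit as r → 0
  have hlim : Tendsto (fun n : ℕ => F (s / (n+2))) atTop (nhds (2*π * Real.log (Complex.abs (g 0)))) := by
    rw [hF_def]
    have hR0 : (0:ℝ) < R := hs0.trans hsR
    have h2π : (0:ℝ) ≤ 2*π := by positivity
    have hg0 : Complex.abs (g 0) ≠ 0 := by
      simpa using hnz 0 (by simpa [mem_ball] using hR0)
    -- uniform bound
    have hcontlog : ContinuousOn (fun z => Real.log (Complex.abs (g z))) (closedBall (0:ℂ) s) := by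
      intro z hz
      have hzb : z ∈ ball (0:ℂ) R := closedBall_subset_ball hsR hz
      exact ((Real.continuousAt_log (by simpa using hnz z hzb)).comp
        (Complex.continuous_abs.continuousAt.comp
          ((hg.differentiableAt (isOpen_ball.mem_nhds hzb)).continuousAt))).continuousWithinAt
    obtain ⟨D, hD⟩ := (isCompact_closedBall (0:ℂ) s).exists_bound_of_continuousOn hcontlog
    have hxs : ∀ n : ℕ, 0 < s/(n+2) ∧ s/(n+2) ≤ s := by
      intro n
      constructor
      · positivity
      · rw [div_le_iff₀ (by positivity)]; nlinarith [hs0.le]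
    have hmem : ∀ (n : ℕ) (θ : ℝ), ((s/(n+2):ℝ):ℂ) * Complex.exp (θ * Complex.I) ∈ closedBall (0:ℂ) s := by
      intro n θ
      simp only [mem_closedBall, Complex.dist_eq, sub_zero, ← Complex.abs_apply_norm, abs_mul_exp]
      rw [abs_of_pos (hxs n).1]; exact (hxs n).2
    have heq : ∀ n : ℕ, (∫ θ in (0:ℝ)..(2*π),
        Real.log (Complex.abs (g (((s/(n+2) : ℝ):ℂ) * Complex.exp (θ * Complex.I)))))
        = ∫ θ in Ioc (0:ℝ) (2*π), Real.log (Complex.abs (g (((s/(n+2) : ℝ):ℂ) * Complex.exp (θ * Complex.I)))) :=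
      fun n => intervalIntegral.integral_of_le h2π
    have hgoal : (2*π * Real.log (Complex.abs (g 0)))
        = ∫ _ in Ioc (0:ℝ) (2*π), Real.log (Complex.abs (g 0)) := by
      rw [setIntegral_const, smul_eq_mul, Real.volume_real_Ioc, sub_zero, max_eq_left h2π]
    rw [hgoal]
    simp only [heq]
    apply MeasureTheory.tendsto_integral_of_dominated_convergence (bound := fun _ => |D|)
    · intro n
      exact (cont_logabs_circle hg hnz (by rw [abs_of_pos (hxs n).1]; exact lt_of_le_of_lt (hxs n).2 hsR)).aestronglyMeasurable.restrict
    · exact integrable_const _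
    · intro n
      refine Filter.Eventually.of_forall (fun θ => ?_)
      exact le_trans (hD _ (hmem n θ)) (le_abs_self D)
    · refine Filter.Eventually.of_forall (fun θ => ?_)
      have h1 : Tendsto (fun n : ℕ => (s/(n+2) : ℝ)) atTop (nhds 0) := by
        apply Tendsto.div_atTop tendsto_const_nhds
        exact tendsto_atTop_add_const_right atTop 2 tendsto_natCast_atTop_atTop
      have h2 : Tendsto (fun n : ℕ => ((s/(n+2):ℝ):ℂ) * Complex.exp (θ * Complex.I)) atTop (nhds 0) := by
        have := ((Complex.continuous_ofReal.tendsto 0).comp h1).mul_const (Complex.exp (θ * Complex.I))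
        simpa using this
      have h3 : Tendsto (fun n : ℕ => g (((s/(n+2):ℝ):ℂ) * Complex.exp (θ * Complex.I))) atTop (nhds (g 0)) :=
        ((hg.differentiableAt (isOpen_ball.mem_nhds (by simpa [mem_ball] using hR0))).continuousAt.tendsto).comp h2
      exact ((Real.continuousAt_log hg0).tendsto.comp ((Complex.continuous_abs.tendsto _).comp h3))

  have hconst : (fun n : ℕ => F (s / (n+2))) = fun _ => F s := by
    funext n
    refine hFconst _ (by positivity) ?_
    rw [div_le_iff₀ (by positivity)]
    nlinarith [hs0.le]
  rw [hconst] at hlim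
  exact (tendsto_const_nhds_iff.mp hlim)

lemma cont_logabs_circle' {g : ℂ → ℂ} {R : ℝ} (hg : DifferentiableOn ℂ g (ball 0 R))
    {x : ℝ} (hx : |x| < R)
    (hnz : ∀ θ : ℝ, g ((x:ℂ) * Complex.exp (θ * Complex.I)) ≠ 0) :
    Continuous (fun θ : ℝ => Real.log (Complex.abs (g ((x:ℂ) * Complex.exp (θ * Complex.I))))) := by
  have hpath : Continuous (fun θ : ℝ => (x:ℂ) * Complex.exp (θ * Complex.I)) := by fun_prop
  have hmem : ∀ θ : ℝ, (x:ℂ) * Complex.exp (θ * Complex.I) ∈ ball (0:ℂ) R := by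
    intro θ
    simpa [mem_ball, Complex.dist_eq, Complex.abs_exp] using hx
  have hgc : Continuous (fun θ : ℝ => g ((x:ℂ) * Complex.exp (θ * Complex.I))) :=
    (hg.continuousOn.comp_continuous hpath hmem)
  rw [continuous_iff_continuousAt]
  intro θ
  exact (Real.continuousAt_log (by simpa using hnz θ)).comp
    ((Complex.continuous_abs.continuousAt).comp hgc.continuousAt)

theorem logAbsCircleIntegral {a : ℂ} {s : ℝ} (hs : 0 < s) (ha : Complex.abs a < s) :
    ∫ θ in (0:ℝ)..(2*π), Real.log (Complex.abs ((s:ℂ) * Complex.exp (θ * Complex.I) - a))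
      = 2*π * Real.log s := by
  by_cases ha0 : a = 0
  · subst ha0
    have : ∀ θ ∈ Set.uIcc (0:ℝ) (2*π), Real.log (Complex.abs ((s:ℂ) * Complex.exp (θ * Complex.I) - 0)) = Real.log s := by
      intro θ _
      rw [sub_zero, abs_mul_exp, abs_of_pos hs]
    rw [intervalIntegral.integral_congr this, intervalIntegral.integral_const, smul_eq_mul, sub_zero]
  · set c : ℂ := (starRingEnd ℂ) a / (s:ℂ) with hc_def
    have habs_c : Complex.abs c = Complex.abs a / s := by
      rw [hc_def, map_div₀, Complex.abs_conj, Complex.abs_ofReal, abs_of_pos hs]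
    have haa : 0 < Complex.abs a := by
      simpa [Complex.abs.pos_iff] using ha0
    set R : ℝ := s / Complex.abs a with hR_def
    have hR1 : 1 < R := by
      rw [hR_def, lt_div_iff₀ haa]; simpa using ha
    set G : ℂ → ℂ := fun z => 1 - c * z with hG_def
    have hGdiff : DifferentiableOn ℂ G (ball 0 R) :=
      ((differentiable_const (1:ℂ)).sub ((differentiable_id).const_mul c)).differentiableOn
    have hGnz : ∀ z ∈ ball (0:ℂ) R, G z ≠ 0 := by
      intro z hz hGz
      rw [mem_ball, Complex.dist_eq, sub_zero] at hz
      have h1 : c * z = 1 := by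
        have := sub_eq_zero.mp hGz; linear_combination -this
      have h2 : Complex.abs (c * z) < 1 := by
        rw [map_mul, habs_c]
        calc Complex.abs a / s * Complex.abs z < Complex.abs a / s * R := by
              apply mul_lt_mul_of_pos_left hz; positivity
          _ = 1 := by rw [hR_def]; field_simp
      rw [h1] at h2; simp at h2
    have hmvp := logAbsMVP hGdiff hGnz one_pos hR1
    have hG0 : G 0 = 1 := by simp [hG_def]
    rw [hG0] at hmvp
    simp only [map_one, Real.log_one, mul_zero] at hmvp
    -- pointwise identity
    have hpt : ∀ θ ∈ Set.uIcc (0:ℝ) (2*π),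
        Real.log (Complex.abs ((s:ℂ) * Complex.exp (θ * Complex.I) - a))
        = Real.log s + Real.log (Complex.abs (G (((1:ℝ):ℂ) * Complex.exp (θ * Complex.I)))) := by
      intro θ _
      have hexp_ne : Complex.exp (θ * Complex.I) ≠ 0 := Complex.exp_ne_zero _
      have key : Complex.abs ((s:ℂ) * Complex.exp (θ * Complex.I) - a)
          = s * Complex.abs (G (((1:ℝ):ℂ) * Complex.exp (θ * Complex.I))) := by
        have e1 : (s:ℂ) * Complex.exp (θ * Complex.I) - a
            = Complex.exp (θ * Complex.I) * ((s:ℂ) - a * Complex.exp (-(θ * Complex.I))) := by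
          rw [Complex.exp_neg]
          field_simp
        have e2 : Complex.abs ((s:ℂ) - a * Complex.exp (-(θ * Complex.I)))
            = Complex.abs ((s:ℂ) - (starRingEnd ℂ) a * Complex.exp (θ * Complex.I)) := by
          rw [← Complex.abs_conj]
          congr 1
          rw [map_sub, map_mul, Complex.conj_ofReal, ← Complex.exp_conj]
          congr 2
          simp [Complex.conj_ofReal]
        have e3 : (s:ℂ) - (starRingEnd ℂ) a * Complex.exp (θ * Complex.I)
            = (s:ℂ) * G (((1:ℝ):ℂ) * Complex.exp (θ * Complex.I)) := by
          rw [hG_def, hc_def]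
          have hs_ne : (s:ℂ) ≠ 0 := by exact_mod_cast hs.ne'
          field_simp
          simp
        rw [e1, map_mul, Complex.abs_exp, e2, e3, map_mul, Complex.abs_ofReal, abs_of_pos hs]
        simp
      rw [key, Real.log_mul hs.ne' ?_]
      · exact (Complex.abs.ne_zero (hGnz _ (by
          simp only [mem_ball, Complex.dist_eq, sub_zero, abs_mul_exp]
          simpa using hR1)))
    rw [intervalIntegral.integral_congr hpt, intervalIntegral.integral_add
      (intervalIntegrable_const)
      ((cont_logabs_circle' hGdiff (by simpa using hR1)
        (fun θ => hGnz _ (by simp only [mem_ball, Complex.dist_eq, sub_zero, abs_mul_exp]; simpa using hR1))).intervalIntegrable _ _),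
      hmvp, intervalIntegral.integral_const, smul_eq_mul]
    ring

theorem zeros_finite {g : ℂ → ℂ} (hg : DifferentiableOn ℂ g (ball 0 1))
    (hg0 : g 0 ≠ 0) {s : ℝ} (hs : s < 1) :
    {z ∈ closedBall (0:ℂ) s | g z = 0}.Finite := by
  by_contra hinf
  obtain ⟨z₀, hz₀K, hacc⟩ := (Set.Infinite.exists_accPt_of_subset_isCompact hinf)
    (isCompact_closedBall (0:ℂ) s) (sep_subset _ _)
  have hz₀ : z₀ ∈ ball (0:ℂ) 1 := by
    rw [mem_closedBall] at hz₀K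
    rw [mem_ball]
    exact lt_of_le_of_lt hz₀K hs
  have hfreq : ∃ᶠ z in nhdsWithin z₀ {z₀}ᶜ, g z = 0 := by
    rw [accPt_iff_frequently] at hacc
    rw [frequently_nhdsWithin_iff]
    exact hacc.mono (fun z hz => ⟨hz.2.2, hz.1⟩)
  have := (hg.analyticOnNhd isOpen_ball).eqOn_zero_of_preconnected_of_frequently_eq_zero
    (convex_ball _ _).isPreconnected hz₀ hfreq
  exact hg0 (this (mem_ball_self one_pos))

theorem jensen_empty {g : ℂ → ℂ} (hg : DifferentiableOn ℂ g (ball 0 1)) (hg0 : g 0 ≠ 0)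
    {s : ℝ} (hs0 : 0 < s) (hs1 : s < 1)
    (hZ : {z ∈ closedBall (0:ℂ) s | g z = 0} = ∅) :
    2*π * Real.log (Complex.abs (g 0))
      ≤ ∫ θ in (0:ℝ)..(2*π), Real.log (Complex.abs (g ((s:ℂ) * Complex.exp (θ * Complex.I)))) := by
  set s' : ℝ := (s+1)/2 with hs'_def
  have hss' : s < s' := by rw [hs'_def]; linarith
  have hs'1 : s' < 1 := by rw [hs'_def]; linarith
  have hfin := zeros_finite hg hg0 hs'1
  have hex : ∃ R0 : ℝ, s < R0 ∧ R0 ≤ s' ∧ ∀ z ∈ ball (0:ℂ) R0, g z ≠ 0 := by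
    by_cases hne : {z ∈ closedBall (0:ℂ) s' | g z = 0}.Nonempty
    · obtain ⟨a, haZ, hamin⟩ := Set.exists_min_image _ (fun z => Complex.abs z) hfin hne
      have has : s < Complex.abs a := by
        by_contra h
        push_neg at h
        have : a ∈ {z ∈ closedBall (0:ℂ) s | g z = 0} :=
          ⟨by rwa [mem_closedBall, Complex.dist_eq, sub_zero], haZ.2⟩
        rw [hZ] at this
        exact this
      refine ⟨min s' (Complex.abs a), lt_min hss' has, min_le_left _ _, ?_⟩
      intro z hz hgz
      rw [mem_ball, Complex.dist_eq, sub_zero] at hz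
      have hzZ : z ∈ {z ∈ closedBall (0:ℂ) s' | g z = 0} :=
        ⟨by rw [mem_closedBall, Complex.dist_eq, sub_zero]
            exact le_of_lt (lt_of_lt_of_le hz (min_le_left _ _)), hgz⟩
      exact absurd (hamin z hzZ) (not_le.mpr (lt_of_lt_of_le hz (min_le_right _ _)))
    · refine ⟨s', hss', le_refl _, ?_⟩
      intro z hz hgz
      rw [Set.not_nonempty_iff_eq_empty] at hne
      have : z ∈ {z ∈ closedBall (0:ℂ) s' | g z = 0} :=
        ⟨ball_subset_closedBall hz, hgz⟩
      rw [hne] at this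
      exact this
  obtain ⟨R0, hsR0, hR0s', hnz⟩ := hex
  exact le_of_eq (logAbsMVP (hg.mono (ball_subset_ball (by linarith))) hnz hs0 hsR0).symm

theorem jensen_aux : ∀ (n : ℕ) (g : ℂ → ℂ), DifferentiableOn ℂ g (ball 0 1) → g 0 ≠ 0 →
    ∀ s : ℝ, 0 < s → s < 1 → (∀ z ∈ sphere (0:ℂ) s, g z ≠ 0) →
    ({z ∈ closedBall (0:ℂ) s | g z = 0}).ncard ≤ n →
    2*π * Real.log (Complex.abs (g 0))
      ≤ ∫ θ in (0:ℝ)..(2*π), Real.log (Complex.abs (g ((s:ℂ) * Complex.exp (θ * Complex.I)))) := by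
  intro n
  induction n with
  | zero =>
    intro g hg hg0 s hs0 hs1 hsph hcard
    apply jensen_empty hg hg0 hs0 hs1
    rw [← Set.ncard_eq_zero (zeros_finite hg hg0 hs1)]
    omega
  | succ n ih =>
    intro g hg hg0 s hs0 hs1 hsph hcard
    have hfin := zeros_finite hg hg0 hs1
    by_cases hZ : {z ∈ closedBall (0:ℂ) s | g z = 0} = ∅
    · exact jensen_empty hg hg0 hs0 hs1 hZ
    · obtain ⟨a, haZ⟩ := Set.nonempty_iff_ne_empty.mpr hZ
      obtain ⟨ha_cb, hga⟩ := haZ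
      have ha0 : a ≠ 0 := fun h => hg0 (h ▸ hga)
      have haa : 0 < Complex.abs a := by simpa [Complex.abs.pos_iff] using ha0
      have haslt : Complex.abs a < s := by
        rcases lt_or_eq_of_le (by rwa [mem_closedBall, Complex.dist_eq, sub_zero] at ha_cb) with h | h
        · exact h
        · exact absurd hga (hsph a (by rwa [mem_sphere, Complex.dist_eq, sub_zero]))
      have haball : a ∈ ball (0:ℂ) 1 := by
        rw [mem_ball, Complex.dist_eq, sub_zero, ← Complex.abs_apply_norm]; linarith
      have hanal := hg.analyticOnNhd isOpen_ball
      have hA : AnalyticAt ℂ g a := hanal a haball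
      have hnev : ¬ ∀ᶠ z in nhds a, g z = 0 := by
        intro h
        have := hanal.eqOn_zero_of_preconnected_of_frequently_eq_zero
          (convex_ball _ _).isPreconnected haball
          ((h.filter_mono nhdsWithin_le_nhds).frequently)
        exact hg0 (this (mem_ball_self one_pos))
      obtain ⟨k, G, hGa, hGa0, hev⟩ := hA.exists_eventuallyEq_pow_smul_nonzero_iff.mpr hnev
      have hk : k ≠ 0 := by
        rintro rfl
        have h := hev.self_of_nhds
        simp at h
        exact hGa0 (by rw [← h]; exact hga)
      set H : ℂ → ℂ := fun z => if z = a then G a else ((z - a)^k)⁻¹ * g z with hH_def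
      have hHg : ∀ z : ℂ, z ≠ a → g z = (z - a)^k * H z := by
        intro z hz
        rw [hH_def]
        simp only [if_neg hz]
        rw [← mul_assoc, mul_inv_cancel₀ (pow_ne_zero _ (sub_ne_zero.mpr hz)), one_mul]
      have hHG : H =ᶠ[nhds a] G := by
        filter_upwards [hev] with z hz
        rw [hH_def]
        by_cases h : z = a
        · simp [h]
        · simp only [if_neg h]
          rw [hz, smul_eq_mul, ← mul_assoc, inv_mul_cancel₀ (pow_ne_zero _ (sub_ne_zero.mpr h)), one_mul]
      have hHdiff : DifferentiableOn ℂ H (ball 0 1) := by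
        intro z hz
        by_cases h : z = a
        · subst h
          exact (hGa.differentiableAt.congr_of_eventuallyEq hHG).differentiableWithinAt
        · have hopen : {w : ℂ | w ≠ a} ∈ nhds z := isOpen_ne.mem_nhds h
          have hdiff : DifferentiableAt ℂ (fun w => ((w - a)^k)⁻¹ * g w) z := by
            apply DifferentiableAt.mul
            · exact ((differentiableAt_id.sub_const a).pow k).inv
                (pow_ne_zero _ (sub_ne_zero.mpr h))
            · exact hg.differentiableAt (isOpen_ball.mem_nhds hz)
          refine (hdiff.congr_of_eventuallyEq ?_).differentiableWithinAt
          filter_upwards [hopen] with w hw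
          rw [hH_def]; simp only [if_neg hw]
      have hH0 : H 0 ≠ 0 := by
        rw [hH_def]
        simp only [if_neg (Ne.symm ha0)]
        exact mul_ne_zero (inv_ne_zero (pow_ne_zero _ (sub_ne_zero.mpr (Ne.symm ha0)))) hg0
      have hsph_ne : ∀ z ∈ sphere (0:ℂ) s, z ≠ a := by
        intro z hzs h
        rw [mem_sphere, Complex.dist_eq, sub_zero] at hzs
        rw [h] at hzs
        exact absurd hzs (ne_of_lt haslt)
      have hHsph : ∀ z ∈ sphere (0:ℂ) s, H z ≠ 0 := by
        intro z hzs
        rw [hH_def]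
        simp only [if_neg (hsph_ne z hzs)]
        exact mul_ne_zero (inv_ne_zero (pow_ne_zero _ (sub_ne_zero.mpr (hsph_ne z hzs)))) (hsph z hzs)
      have hZH : {z ∈ closedBall (0:ℂ) s | H z = 0} = {z ∈ closedBall (0:ℂ) s | g z = 0} \ {a} := by
        ext z
        by_cases h : z = a
        · subst h
          simp only [mem_sep_iff, mem_diff, mem_singleton_iff, not_true, and_false, iff_false,
            not_and]
          intro _
          rw [hH_def]; simp only [if_pos rfl]; exact hGa0
        · simp only [mem_sep_iff, mem_diff, mem_singleton_iff, h, not_false_iff, and_true]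
          rw [hH_def]
          simp only [if_neg h]
          constructor
          · rintro ⟨h1, h2⟩
            rcases mul_eq_zero.mp h2 with h3 | h3
            · exact absurd h3 (inv_ne_zero (pow_ne_zero _ (sub_ne_zero.mpr h)))
            · exact ⟨h1, h3⟩
          · rintro ⟨h1, h2⟩
            exact ⟨h1, by rw [h2, mul_zero]⟩
      have hcardH : ({z ∈ closedBall (0:ℂ) s | H z = 0}).ncard ≤ n := by
        rw [hZH]
        have h1 : ({z ∈ closedBall (0:ℂ) s | g z = 0} \ {a}).ncard
            = ({z ∈ closedBall (0:ℂ) s | g z = 0}).ncard - 1 :=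
          Set.ncard_diff_singleton_of_mem (show a ∈ {z ∈ closedBall (0:ℂ) s | g z = 0} from ⟨ha_cb, hga⟩)
        have h2 : 1 ≤ ({z ∈ closedBall (0:ℂ) s | g z = 0}).ncard :=
          (Set.ncard_pos hfin).mpr ⟨a, ha_cb, hga⟩
        omega
      have hIH := ih H hHdiff hH0 s hs0 hs1 hHsph hcardH
      -- pointwise identity on the circle
      have hsph_mem : ∀ θ : ℝ, ((s:ℂ) * Complex.exp (θ * Complex.I)) ∈ sphere (0:ℂ) s := by
        intro θ
        rw [mem_sphere, Complex.dist_eq, sub_zero, ← Complex.abs_apply_norm, abs_mul_exp, abs_of_pos hs0]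
      have hpt : ∀ θ ∈ Set.uIcc (0:ℝ) (2*π),
          Real.log (Complex.abs (g ((s:ℂ) * Complex.exp (θ * Complex.I))))
          = k * Real.log (Complex.abs ((s:ℂ) * Complex.exp (θ * Complex.I) - a))
            + Real.log (Complex.abs (H ((s:ℂ) * Complex.exp (θ * Complex.I)))) := by
        intro θ _
        set z := (s:ℂ) * Complex.exp (θ * Complex.I)
        have hz := hsph_ne z (hsph_mem θ)
        rw [hHg z hz, map_mul, map_pow,
          Real.log_mul (pow_ne_zero _ (Complex.abs.ne_zero (sub_ne_zero.mpr hz)))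
            (Complex.abs.ne_zero (hHsph z (hsph_mem θ))), Real.log_pow]
      have hint1 : IntervalIntegrable
          (fun θ : ℝ => Real.log (Complex.abs ((s:ℂ) * Complex.exp (θ * Complex.I) - a)))
          volume 0 (2*π) := by
        apply Continuous.intervalIntegrable
        have hgdiff : DifferentiableOn ℂ (fun z : ℂ => z - a) (ball 0 (s+1)) :=
          (differentiable_id.sub_const a).differentiableOn
        have := cont_logabs_circle' hgdiff (x := s) (by rw [abs_of_pos hs0]; linarith)
          (fun θ => sub_ne_zero.mpr (hsph_ne _ (hsph_mem θ)))
        exact this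
      have hint2 : IntervalIntegrable
          (fun θ : ℝ => Real.log (Complex.abs (H ((s:ℂ) * Complex.exp (θ * Complex.I)))))
          volume 0 (2*π) := by
        apply Continuous.intervalIntegrable
        exact cont_logabs_circle' hHdiff (x := s) (by rw [abs_of_pos hs0]; linarith)
          (fun θ => hHsph _ (hsph_mem θ))
      rw [intervalIntegral.integral_congr hpt, intervalIntegral.integral_add
        (hint1.const_mul _) hint2, intervalIntegral.integral_const_mul,
        logAbsCircleIntegral hs0 haslt]
      -- now the value at 0
      have h0 : Real.log (Complex.abs (g 0))
          = k * Real.log (Complex.abs a) + Real.log (Complex.abs (H 0)) := by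
        rw [hHg 0 (Ne.symm ha0), map_mul, map_pow,
          Real.log_mul (pow_ne_zero _ (Complex.abs.ne_zero (sub_ne_zero.mpr (Ne.symm ha0))))
            (Complex.abs.ne_zero hH0), Real.log_pow]
        simp
      rw [h0]
      have hloga : Real.log (Complex.abs a) ≤ Real.log s := Real.log_le_log haa haslt.le
      nlinarith [hIH, Real.pi_pos, mul_le_mul_of_nonneg_left hloga (by positivity : (0:ℝ) ≤ (k:ℝ))]

lemma cont_logabs_delta {g : ℂ → ℂ} (hg : DifferentiableOn ℂ g (ball 0 1))
    {x δ : ℝ} (hx : |x| < 1) (hδ : 0 < δ) :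
    Continuous (fun θ : ℝ => Real.log (Complex.abs (g ((x:ℂ) * Complex.exp (θ * Complex.I))) + δ)) := by
  have hmem : ∀ θ : ℝ, (x:ℂ) * Complex.exp (θ * Complex.I) ∈ ball (0:ℂ) 1 := by
    intro θ
    simpa [mem_ball, Complex.dist_eq, Complex.abs_exp] using hx
  have hgc : Continuous (fun θ : ℝ => Complex.abs (g ((x:ℂ) * Complex.exp (θ * Complex.I)))) :=
    Complex.continuous_abs.comp (hg.continuousOn.comp_continuous (cont_path x) hmem)
  rw [continuous_iff_continuousAt]
  intro θ
  exact (Real.continuousAt_log (by positivity)).comp (hgc.continuousAt.add continuousAt_const)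

section main
variable {f : ℂ → ℂ}

lemma reduce_at_zero (hf : DifferentiableOn ℂ f (ball (0:ℂ) 1))
    (hne : ∃ z ∈ ball (0:ℂ) 1, f z ≠ 0) :
    ∃ (m : ℕ) (g : ℂ → ℂ), DifferentiableOn ℂ g (ball 0 1) ∧ g 0 ≠ 0 ∧
      ∀ z : ℂ, z ≠ 0 → f z = z ^ m * g z := by
  obtain ⟨z₁, hz₁, hfz₁⟩ := hne
  have hanal := hf.analyticOnNhd isOpen_ball
  have hA : AnalyticAt ℂ f 0 := hanal 0 (mem_ball_self one_pos)
  have hnev : ¬ ∀ᶠ z in nhds 0, f z = 0 := by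
    intro h
    have := hanal.eqOn_zero_of_preconnected_of_frequently_eq_zero
      (convex_ball _ _).isPreconnected (mem_ball_self one_pos)
      ((h.filter_mono nhdsWithin_le_nhds).frequently)
    exact hfz₁ (this hz₁)
  obtain ⟨m, G, hGa, hG0, hev⟩ := hA.exists_eventuallyEq_pow_smul_nonzero_iff.mpr hnev
  simp only [sub_zero, smul_eq_mul] at hev
  refine ⟨m, fun z => if z = 0 then G 0 else (z ^ m)⁻¹ * f z, ?_, by simpa using hG0, ?_⟩
  · intro z hz
    by_cases h : z = 0
    · subst h
      have hHG : (fun z : ℂ => if z = 0 then G 0 else (z ^ m)⁻¹ * f z) =ᶠ[nhds 0] G := by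
        filter_upwards [hev] with w hw
        by_cases h : w = 0
        · simp [h]
        · simp only [if_neg h]
          rw [hw, ← mul_assoc, inv_mul_cancel₀ (pow_ne_zero _ h), one_mul]
      exact (hGa.differentiableAt.congr_of_eventuallyEq hHG).differentiableWithinAt
    · have hdiff : DifferentiableAt ℂ (fun w : ℂ => ((w ^ m)⁻¹ * f w)) z :=
        ((differentiableAt_id.pow m).inv (pow_ne_zero _ h)).mul
          (hf.differentiableAt (isOpen_ball.mem_nhds hz))
      refine (hdiff.congr_of_eventuallyEq ?_).differentiableWithinAt
      filter_upwards [isOpen_ne.mem_nhds h] with w hw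
      simp only [if_neg hw]
  · intro z hz
    simp only [if_neg hz]
    rw [← mul_assoc, mul_inv_cancel₀ (pow_ne_zero _ hz), one_mul]

lemma good_radii {g : ℂ → ℂ} (hg : DifferentiableOn ℂ g (ball 0 1)) (hg0 : g 0 ≠ 0) :
    ∀ n : ℕ, ∃ x : ℝ, (1 - 1/(n+1) < x) ∧ (1/2 ≤ x) ∧ x < 1 ∧
      ∀ z ∈ sphere (0:ℂ) x, g z ≠ 0 := by
  intro n
  set t₀ : ℝ := max (1/2) (1 - 1/(n+1)) with ht₀_def
  have ht₀1 : t₀ < 1 := by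
    rw [ht₀_def, max_lt_iff]
    constructor
    · norm_num
    · have : (0:ℝ) < 1/(n+1) := by positivity
      linarith
  set t₁ : ℝ := (t₀ + 1)/2 with ht₁_def
  have ht01 : t₀ < t₁ := by rw [ht₁_def]; linarith
  have ht₁1 : t₁ < 1 := by rw [ht₁_def]; linarith
  have hfin := zeros_finite hg hg0 ht₁1
  have himg : (Complex.abs '' {z ∈ closedBall (0:ℂ) t₁ | g z = 0}).Finite := hfin.image _
  have hex : ((Set.Ioo t₀ t₁) \ (Complex.abs '' {z ∈ closedBall (0:ℂ) t₁ | g z = 0})).Nonempty :=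
    ((Set.Ioo_infinite ht01).diff himg).nonempty
  obtain ⟨x, hxIoo, hximg⟩ := hex
  refine ⟨x, lt_of_le_of_lt (le_max_right _ _) hxIoo.1, le_of_lt (lt_of_le_of_lt (le_max_left _ _) hxIoo.1), hxIoo.2.trans ht₁1, ?_⟩
  intro z hzs hgz
  rw [mem_sphere, Complex.dist_eq, sub_zero] at hzs
  apply hximg
  exact ⟨z, ⟨by rw [mem_closedBall, Complex.dist_eq, sub_zero, hzs]; exact hxIoo.2.le, hgz⟩, hzs⟩

end main

/-- A bounded holomorphic function on the open unit disc, not identically zero,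
has nonzero radial boundary values almost everywhere: the set of angles θ where
the radial limit exists and equals zero has Lebesgue measure zero. -/
theorem bounded_holomorphic_radial_limits_nonzero_ae
    (f : ℂ → ℂ) (hf : DifferentiableOn ℂ f (ball (0:ℂ) 1))
    (hbd : ∃ C : ℝ, ∀ z ∈ ball (0:ℂ) 1, ‖f z‖ ≤ C)
    (hne : ∃ z ∈ ball (0:ℂ) 1, f z ≠ 0) :
    volume {θ : ℝ | Tendsto (fun r : ℝ => f ((r : ℂ) * Complex.exp (θ * Complex.I)))
      (nhdsWithin 1 (Set.Iio 1)) (nhds 0)} = 0 := by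
  have h2π : (0:ℝ) < 2*π := by positivity
  obtain ⟨m, g, hg, hg0, hfg⟩ := reduce_at_zero hf hne
  obtain ⟨C, hC⟩ := hbd
  -- bound for g on outer circles
  set M : ℝ := C * 2^m with hM_def
  have hMnn : 0 ≤ M := by
    have : (0:ℝ) ≤ C := le_trans (norm_nonneg _) (hC 0 (mem_ball_self one_pos))
    positivity
  have hgM : ∀ x : ℝ, 1/2 ≤ x → x < 1 → ∀ θ : ℝ,
      Complex.abs (g ((x:ℂ) * Complex.exp (θ * Complex.I))) ≤ M := by
    intro x hx2 hx1 θ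
    set z : ℂ := (x:ℂ) * Complex.exp (θ * Complex.I) with hz_def
    have hzabs : Complex.abs z = x := by rw [hz_def, abs_mul_exp, abs_of_pos (by linarith)]
    have hz0 : z ≠ 0 := by
      intro h; rw [h] at hzabs; simp at hzabs; linarith
    have hzball : z ∈ ball (0:ℂ) 1 := by rw [mem_ball, Complex.dist_eq, sub_zero, ← Complex.abs_apply_norm, hzabs]; exact hx1
    have h1 : Complex.abs (g z) = Complex.abs (f z) / x ^ m := by
      have := hfg z hz0
      rw [this, map_mul, map_pow, hzabs]
      field_simp
    rw [h1]
    have h2 : Complex.abs (f z) ≤ C := hC z hzball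
    have h3 : (1/2:ℝ)^m ≤ x^m := pow_le_pow_left₀ (by norm_num) hx2 m
    have h4 : (0:ℝ) < x^m := by positivity
    rw [div_le_iff₀ h4, hM_def]
    calc Complex.abs (f z) ≤ C := h2
      _ = C * 2^m * (1/2:ℝ)^m := by rw [mul_assoc, ← mul_pow]; norm_num
      _ ≤ C * 2^m * x^m := by
          apply mul_le_mul_of_nonneg_left h3
          positivity
  -- good radii
  choose r hr1 hr2 hr3 hr4 using good_radii hg hg0
  have hrtend : Tendsto r atTop (nhdsWithin 1 (Set.Iio 1)) := by
    rw [tendsto_nhdsWithin_iff]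
    constructor
    · have hlow : Tendsto (fun n : ℕ => 1 - 1/((n:ℝ)+1)) atTop (nhds 1) := by
        have : Tendsto (fun n : ℕ => 1 / ((n:ℝ) + 1)) atTop (nhds 0) := tendsto_one_div_add_atTop_nhds_zero_nat
        have h2 := (tendsto_const_nhds (x := (1:ℝ)) (f := atTop (α := ℕ))).sub this
        simpa using h2
      exact tendsto_of_tendsto_of_tendsto_of_le_of_le hlow tendsto_const_nhds
        (fun n => (hr1 n).le) (fun n => (hr3 n).le)
    · exact Filter.Eventually.of_forall (fun n => hr3 n)
  -- the measurable superset
  set E' : Set ℝ := {θ : ℝ | Tendsto (fun n : ℕ => g ((r n : ℂ) * Complex.exp (θ * Complex.I)))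
    atTop (nhds 0)} with hE'_def
  have hgcont : ∀ x : ℝ, |x| < 1 → Continuous (fun θ : ℝ => g ((x:ℂ) * Complex.exp (θ * Complex.I))) := by
    intro x hx
    apply hg.continuousOn.comp_continuous (cont_path x)
    intro θ
    simpa [mem_ball, Complex.dist_eq, Complex.abs_exp] using hx
  have hE'meas : MeasurableSet E' :=
    measurableSet_tendsto (nhds 0) (fun n => (hgcont (r n)
      (by rw [abs_of_pos (by linarith [hr2 n])]; exact hr3 n)).measurable)
  -- inclusion
  have hEsub : {θ : ℝ | Tendsto (fun ρ : ℝ => f ((ρ : ℂ) * Complex.exp (θ * Complex.I)))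
      (nhdsWithin 1 (Set.Iio 1)) (nhds 0)} ⊆ E' := by
    intro θ hθ
    have hf_seq : Tendsto (fun n : ℕ => f ((r n : ℂ) * Complex.exp (θ * Complex.I)))
        atTop (nhds 0) := hθ.comp hrtend
    rw [hE'_def, mem_setOf_eq]
    apply squeeze_zero_norm (a := fun n => 2^m * ‖f ((r n : ℂ) * Complex.exp (θ * Complex.I))‖)
    · intro n
      have hrn0 : (0:ℝ) < r n := by linarith [hr2 n]
      have hz0 : ((r n : ℂ) * Complex.exp (θ * Complex.I)) ≠ 0 := by
        intro h
        have := congrArg Complex.abs h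
        rw [abs_mul_exp, abs_of_pos hrn0] at this
        simp at this; linarith
      have heq := hfg _ hz0
      have habs : Complex.abs ((r n : ℂ) * Complex.exp (θ * Complex.I)) = r n := by
        rw [abs_mul_exp, abs_of_pos hrn0]
      have : ‖g ((r n : ℂ) * Complex.exp (θ * Complex.I))‖
          = ‖f ((r n : ℂ) * Complex.exp (θ * Complex.I))‖ / (r n)^m := by
        have h2 : f _ = _ := heq
        rw [show ‖g ((r n : ℂ) * Complex.exp (θ * Complex.I))‖
            = Complex.abs (g ((r n : ℂ) * Complex.exp (θ * Complex.I))) from rfl]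
        rw [show ‖f ((r n : ℂ) * Complex.exp (θ * Complex.I))‖
            = Complex.abs (f ((r n : ℂ) * Complex.exp (θ * Complex.I))) from rfl]
        rw [heq, map_mul, map_pow, habs]
        field_simp
      rw [this, div_le_iff₀ (by positivity)]
      have h3 : (1/2:ℝ)^m ≤ (r n)^m := pow_le_pow_left₀ (by norm_num) (hr2 n) m
      calc ‖f ((r n : ℂ) * Complex.exp (θ * Complex.I))‖
          = 2^m * ‖f ((r n : ℂ) * Complex.exp (θ * Complex.I))‖ * (1/2:ℝ)^m := by
            rw [mul_comm ((2:ℝ)^m) _, mul_assoc, ← mul_pow]; norm_num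
        _ ≤ 2^m * ‖f ((r n : ℂ) * Complex.exp (θ * Complex.I))‖ * (r n)^m := by
            apply mul_le_mul_of_nonneg_left h3; positivity
    · have := (hf_seq.norm).const_mul ((2:ℝ)^m)
      simpa using this
  apply measure_mono_null hEsub
  -- periodicity
  have hper : ∀ (θ : ℝ) (k : ℤ), (θ + 2*π*k ∈ E') ↔ θ ∈ E' := by
    intro θ k
    have hexp : ∀ x : ℝ, Complex.exp (((θ + 2*π*k : ℝ) : ℂ) * Complex.I)
        = Complex.exp ((θ:ℝ) * Complex.I) := by
      intro x
      push_cast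
      rw [add_mul, Complex.exp_add]
      have : ((2:ℂ)*π*k) * Complex.I = k * (2*π*Complex.I) := by ring
      rw [this, Complex.exp_int_mul_two_pi_mul_I, mul_one]
    rw [hE'_def]
    simp only [mem_setOf_eq, hexp 0]
  -- reduce to the fundamental domain
  suffices hA0 : volume (E' ∩ Set.Ioc 0 (2*π)) = 0 by
    have hcover : E' ⊆ ⋃ k : ℤ, (fun θ : ℝ => θ + 2*π*k) ⁻¹' (E' ∩ Set.Ioc 0 (2*π)) := by
      intro θ hθ
      set u : ℝ := -θ/(2*π) with hu_def
      set k : ℤ := ⌊u⌋ + 1 with hk_def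
      refine Set.mem_iUnion.mpr ⟨k, ?_⟩
      have h1 : u < (k:ℝ) := by rw [hk_def]; push_cast; exact Int.lt_floor_add_one u
      have h2 : (k:ℝ) ≤ u + 1 := by rw [hk_def]; push_cast; linarith [Int.floor_le u]
      have he : 2*π*u = -θ := by rw [hu_def]; field_simp
      have hmul1 : -θ < 2*π*(k:ℝ) := by
        have h3 := (mul_lt_mul_iff_right₀ h2π).mpr h1
        linarith
      have hmul2 : 2*π*(k:ℝ) ≤ -θ + 2*π := by
        have h3 := (mul_le_mul_iff_right₀ h2π).mpr h2
        rw [mul_add, mul_one] at h3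
        linarith
      simp only [Set.mem_preimage, Set.mem_inter_iff, Set.mem_Ioc]
      exact ⟨(hper θ k).mpr hθ, by linarith, by linarith⟩
    apply measure_mono_null hcover
    apply measure_iUnion_null
    intro k
    have : volume ((fun θ : ℝ => θ + 2*π*k) ⁻¹' (E' ∩ Set.Ioc 0 (2*π)))
        = volume (E' ∩ Set.Ioc 0 (2*π)) := by
      exact measure_preimage_add_right volume (2*π*k) _
    rw [this, hA0]
  by_contra hA0
  set A : Set ℝ := E' ∩ Set.Ioc 0 (2*π) with hA_def
  have hAmeas : MeasurableSet A := hE'meas.inter measurableSet_Ioc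
  have hAsub : A ⊆ Set.Ioc 0 (2*π) := inter_subset_right
  have hIocvol : volume (Set.Ioc (0:ℝ) (2*π)) = ENNReal.ofReal (2*π) := by
    rw [Real.volume_Ioc, sub_zero]
  have hAfin : volume A ≠ ⊤ :=
    ne_top_of_le_ne_top (by rw [hIocvol]; exact ENNReal.ofReal_ne_top) (measure_mono hAsub)
  set mr : ℝ := (volume A).toReal with hmr_def
  have hmr0 : 0 < mr := ENNReal.toReal_pos hA0 hAfin
  have hmr2π : mr ≤ 2*π := by
    have h1 := measure_mono (μ := (volume : Measure ℝ)) hAsub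
    rw [hIocvol] at h1
    calc mr = (volume A).toReal := rfl
      _ ≤ (ENNReal.ofReal (2*π)).toReal := ENNReal.toReal_mono ENNReal.ofReal_ne_top h1
      _ = 2*π := ENNReal.toReal_ofReal h2π.le
  set K : ℝ := Real.log (M+1) with hK_def
  have hK0 : 0 ≤ K := Real.log_nonneg (by linarith)
  set L : ℝ := 2*π*Real.log (Complex.abs (g 0)) with hL_def
  set δ : ℝ := min (1/2) (Real.exp ((L - 2*π*K - 1)/mr)) with hδ_def
  have hδ0 : 0 < δ := lt_min (by norm_num) (Real.exp_pos _)
  have hδ1 : δ ≤ 1 := le_trans (min_le_left _ _) (by norm_num)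
  have hδlog : mr * Real.log δ ≤ L - 2*π*K - 1 := by
    have h1 : Real.log δ ≤ (L - 2*π*K - 1)/mr := by
      calc Real.log δ ≤ Real.log (Real.exp ((L - 2*π*K - 1)/mr)) :=
            Real.log_le_log hδ0 (min_le_right _ _)
        _ = (L - 2*π*K - 1)/mr := Real.log_exp _
    calc mr * Real.log δ ≤ mr * ((L - 2*π*K - 1)/mr) := by
          exact mul_le_mul_of_nonneg_left h1 hmr0.le
      _ = L - 2*π*K - 1 := by field_simp
  have hsphmem : ∀ (n : ℕ) (θ : ℝ), ((r n : ℂ) * Complex.exp (θ * Complex.I)) ∈ sphere (0:ℂ) (r n) := by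
    intro n θ
    rw [mem_sphere, Complex.dist_eq, sub_zero, ← Complex.abs_apply_norm, abs_mul_exp, abs_of_pos (by linarith [hr2 n])]
  have hrnabs : ∀ n : ℕ, |r n| < 1 := by
    intro n
    rw [abs_of_pos (by linarith [hr2 n])]; exact hr3 n
  -- key inequality for each n
  have hkey : ∀ n : ℕ, L - K * (2*π - mr)
      ≤ ∫ θ in A, Real.log (Complex.abs (g ((r n:ℂ) * Complex.exp (θ*Complex.I))) + δ) := by
    intro n
    have hrn0 : (0:ℝ) < r n := by linarith [hr2 n]
    have hjen := jensen_aux ({z ∈ closedBall (0:ℂ) (r n) | g z = 0}).ncard g hg hg0 (r n)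
      hrn0 (hr3 n) (hr4 n) le_rfl
    have hcont1 := cont_logabs_circle' hg (hrnabs n) (fun θ => hr4 n _ (hsphmem n θ))
    have hcontδ := cont_logabs_delta hg (hrnabs n) hδ0
    have hint1 := hcont1.intervalIntegrable (μ := volume) 0 (2*π)
    have hint2 := hcontδ.intervalIntegrable (μ := volume) 0 (2*π)
    have hmono : (∫ θ in (0:ℝ)..(2*π), Real.log (Complex.abs (g ((r n:ℂ) * Complex.exp (θ*Complex.I)))))
        ≤ ∫ θ in (0:ℝ)..(2*π), Real.log (Complex.abs (g ((r n:ℂ) * Complex.exp (θ*Complex.I))) + δ) := by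
      apply intervalIntegral.integral_mono_on h2π.le hint1 hint2
      intro θ _
      have hpos : 0 < Complex.abs (g ((r n:ℂ) * Complex.exp (θ*Complex.I))) := by
        have := hr4 n _ (hsphmem n θ)
        simpa [Complex.abs.pos_iff] using this
      exact Real.log_le_log hpos (by linarith)
    have hIntOn : IntegrableOn
        (fun θ : ℝ => Real.log (Complex.abs (g ((r n:ℂ) * Complex.exp (θ*Complex.I))) + δ))
        (Set.Ioc 0 (2*π)) volume := hcontδ.integrableOn_Ioc
    have hIoc : (∫ θ in (0:ℝ)..(2*π), Real.log (Complex.abs (g ((r n:ℂ) * Complex.exp (θ*Complex.I))) + δ))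
        = ∫ θ in Set.Ioc (0:ℝ) (2*π), Real.log (Complex.abs (g ((r n:ℂ) * Complex.exp (θ*Complex.I))) + δ) :=
      intervalIntegral.integral_of_le h2π.le
    have hsplit : (∫ θ in Set.Ioc (0:ℝ) (2*π), Real.log (Complex.abs (g ((r n:ℂ) * Complex.exp (θ*Complex.I))) + δ))
        = (∫ θ in A, Real.log (Complex.abs (g ((r n:ℂ) * Complex.exp (θ*Complex.I))) + δ))
          + ∫ θ in (Set.Ioc (0:ℝ) (2*π) \ A), Real.log (Complex.abs (g ((r n:ℂ) * Complex.exp (θ*Complex.I))) + δ) := by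
      rw [← MeasureTheory.setIntegral_union disjoint_sdiff_self_right
        (measurableSet_Ioc.diff hAmeas) (hIntOn.mono_set hAsub) (hIntOn.mono_set diff_subset),
        Set.union_diff_cancel hAsub]
    have hvol_diff : (volume (Set.Ioc (0:ℝ) (2*π) \ A)).toReal = 2*π - mr := by
      rw [measure_diff hAsub hAmeas.nullMeasurableSet hAfin, hIocvol,
        ENNReal.toReal_sub_of_le (by rw [← hIocvol]; exact measure_mono hAsub) ENNReal.ofReal_ne_top,
        ENNReal.toReal_ofReal h2π.le]
    have hcomp : (∫ θ in (Set.Ioc (0:ℝ) (2*π) \ A), Real.log (Complex.abs (g ((r n:ℂ) * Complex.exp (θ*Complex.I))) + δ))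
        ≤ (2*π - mr) * K := by
      have hbd : ∀ θ ∈ Set.Ioc (0:ℝ) (2*π) \ A,
          Real.log (Complex.abs (g ((r n:ℂ) * Complex.exp (θ*Complex.I))) + δ) ≤ K := by
        intro θ _
        rw [hK_def]
        apply Real.log_le_log (by positivity)
        have := hgM (r n) (hr2 n) (hr3 n) θ
        linarith
      calc (∫ θ in (Set.Ioc (0:ℝ) (2*π) \ A), Real.log (Complex.abs (g ((r n:ℂ) * Complex.exp (θ*Complex.I))) + δ))
          ≤ ∫ _ in (Set.Ioc (0:ℝ) (2*π) \ A), K := by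
            apply setIntegral_mono_on (hIntOn.mono_set diff_subset)
              (integrableOn_const (lt_of_le_of_lt (measure_mono diff_subset) (by rw [hIocvol]; exact ENNReal.ofReal_lt_top)).ne)
              (measurableSet_Ioc.diff hAmeas) hbd
        _ = (2*π - mr) * K := by rw [setIntegral_const, smul_eq_mul, measureReal_def, hvol_diff]
    have hAle : (∫ θ in A, Real.log (Complex.abs (g ((r n:ℂ) * Complex.exp (θ*Complex.I))) + δ)) ≥ L - (2*π - mr) * K := by
      have := hjen
      rw [← hL_def] at this
      linarith [hmono, hIoc ▸ hsplit, hcomp]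
    linarith [hAle]
  -- dominated convergence
  have hlimit : Tendsto (fun n : ℕ => ∫ θ in A,
      Real.log (Complex.abs (g ((r n:ℂ) * Complex.exp (θ*Complex.I))) + δ)) atTop
      (nhds (mr * Real.log δ)) := by
    have hconst : mr * Real.log δ = ∫ _ in A, Real.log δ := by
      rw [setIntegral_const, smul_eq_mul, measureReal_def, hmr_def]
    rw [hconst]
    haveI : IsFiniteMeasure (volume.restrict A) :=
      ⟨by rw [Measure.restrict_apply_univ]; exact lt_of_le_of_ne le_top hAfin⟩
    set B : ℝ := max (|Real.log δ|) (|K|) with hB_def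
    apply MeasureTheory.tendsto_integral_of_dominated_convergence (bound := fun _ => B)
    · intro n
      exact ((cont_logabs_delta hg (hrnabs n) hδ0).aestronglyMeasurable).restrict
    · exact integrable_const _
    · intro n
      rw [ae_restrict_iff' hAmeas]
      apply Filter.Eventually.of_forall
      intro θ hθA
      have hθIoc := hAsub hθA
      have hup : Real.log (Complex.abs (g ((r n:ℂ) * Complex.exp (θ*Complex.I))) + δ) ≤ K := by
        rw [hK_def]
        apply Real.log_le_log (by positivity)
        have := hgM (r n) (hr2 n) (hr3 n) θ
        linarith
      have hdown : Real.log δ ≤ Real.log (Complex.abs (g ((r n:ℂ) * Complex.exp (θ*Complex.I))) + δ) := by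
        apply Real.log_le_log hδ0
        have := Complex.abs.nonneg (g ((r n:ℂ) * Complex.exp (θ*Complex.I)))
        linarith
      rw [Real.norm_eq_abs, abs_le]
      constructor
      · calc -B ≤ -|Real.log δ| := by simp [hB_def]
          _ ≤ Real.log δ := neg_abs_le _
          _ ≤ _ := hdown
      · calc Real.log (Complex.abs (g ((r n:ℂ) * Complex.exp (θ*Complex.I))) + δ)
            ≤ K := hup
          _ ≤ |K| := le_abs_self _
          _ ≤ B := le_max_right _ _
    · rw [ae_restrict_iff' hAmeas]
      apply Filter.Eventually.of_forall
      intro θ hθA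
      have hθE' : θ ∈ E' := hθA.1
      rw [hE'_def, mem_setOf_eq] at hθE'
      have habs : Tendsto (fun n : ℕ => Complex.abs (g ((r n:ℂ) * Complex.exp (θ*Complex.I))))
          atTop (nhds 0) := by
        have := (Complex.continuous_abs.tendsto 0).comp hθE'
        rw [AbsoluteValue.map_zero] at this; exact this
      have hadd : Tendsto (fun n : ℕ => Complex.abs (g ((r n:ℂ) * Complex.exp (θ*Complex.I))) + δ)
          atTop (nhds δ) := by
        have := habs.add_const δ
        simpa using this
      exact ((Real.continuousAt_log hδ0.ne').tendsto).comp hadd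
  have hfinal : L - K * (2*π - mr) ≤ mr * Real.log δ :=
    ge_of_tendsto hlimit (Filter.Eventually.of_forall hkey)
  nlinarith [mul_nonneg hK0 hmr0.le]

end
end

section
/- If for every \epsilon > 0 the constant function -1 on [0,H] can be approximated within \epsilon in L^2(0,H) by a finite generalized Dirichlet polynomial \sum_{n=1}^N b_n e^{-i\lambda_n t} (with \lambda_n > 0 strictly increasing), then the set of all such Dirichlet polynomials is dense in L^2(0,H). -/
open MeasureTheory Filter Complex Set
open scoped ENNReal NNReal

namespace DirichletAux

variable {H : ℝ}

/-- Continuous functions are in L² of the restricted measure. -/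
lemma memLp_cont {g : ℝ → ℂ} (hg : Continuous g) :
    MemLp g 2 (volume.restrict (Set.Ioo (0:ℝ) H)) := by
  obtain ⟨C, hC⟩ := (isCompact_Icc (a := (0:ℝ)) (b := H)).exists_bound_of_continuousOn
    hg.continuousOn
  refine MemLp.of_bound hg.aestronglyMeasurable C ?_
  refine (ae_restrict_iff' measurableSet_Ioo).2 (ae_of_all _ fun t ht => ?_)
  exact hC t (Set.Ioo_subset_Icc_self ht)

/-- The L² norm squared as an integral. -/
lemma norm_sq_eq {α : Type*} [MeasurableSpace α] {ν : Measure α} (u : Lp ℂ 2 ν) :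
    ‖u‖ ^ 2 = ∫ a, ‖u a‖ ^ 2 ∂ν := by
  have hm := Lp.memLp u
  have h2 : ((2:ℝ≥0∞)).toReal = (2:ℝ) := by simp
  rw [Lp.norm_def, hm.eLpNorm_eq_integral_rpow_norm two_ne_zero ENNReal.ofNat_ne_top]
  have hnn : (0:ℝ) ≤ ∫ a, ‖u a‖ ^ (2:ℝ≥0∞).toReal ∂ν :=
    integral_nonneg fun a => by positivity
  rw [ENNReal.toReal_ofReal (Real.rpow_nonneg hnn _)]
  rw [← Real.rpow_natCast (_ ^ (2:ℝ≥0∞).toReal⁻¹) 2, ← Real.rpow_mul hnn]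
  rw [h2]
  norm_num


/-- Conversion of the interval integral into an integral over the restricted measure. -/
lemma intInt_eq (hH : 0 < H) (F : ℝ → ℝ) :
    (∫ t in (0:ℝ)..H, F t) = ∫ t, F t ∂(volume.restrict (Set.Ioo (0:ℝ) H)) := by
  rw [intervalIntegral.integral_of_le hH.le, integral_Ioc_eq_integral_Ioo]

/-- Core conversion: interval integral of ‖φ‖² equals the L²-norm squared. -/
lemma int_norm_sq_eq (hH : 0 < H) (φ : ℝ → ℂ)
    (u : Lp ℂ 2 (volume.restrict (Set.Ioo (0:ℝ) H)))
    (hφ : ⇑u =ᵐ[volume.restrict (Set.Ioo (0:ℝ) H)] φ) :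
    (∫ t in (0:ℝ)..H, ‖φ t‖ ^ 2) = ‖u‖ ^ 2 := by
  rw [intInt_eq hH, norm_sq_eq u]
  refine integral_congr_ae ?_
  filter_upwards [hφ] with t ht
  rw [ht]

/-- The primitive (with indicator cutoff). -/
noncomputable def Pr (H : ℝ) (h : ℝ → ℂ) : ℝ → ℂ :=
  fun t => ∫ s in (0:ℝ)..t, (Set.Ioo (0:ℝ) H).indicator h s

lemma integrable_ind {h : ℝ → ℂ} (hh : MemLp h 2 (volume.restrict (Set.Ioo (0:ℝ) H))) :
    Integrable ((Set.Ioo (0:ℝ) H).indicator h) volume := by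
  have : Integrable h (volume.restrict (Set.Ioo (0:ℝ) H)) :=
    hh.integrable one_le_two
  rwa [integrable_indicator_iff measurableSet_Ioo]

lemma cont_Pr {h : ℝ → ℂ} (hh : MemLp h 2 (volume.restrict (Set.Ioo (0:ℝ) H))) :
    Continuous (Pr H h) :=
  (integrable_ind hh).continuous_primitive 0

lemma memLp_Pr {h : ℝ → ℂ} (hh : MemLp h 2 (volume.restrict (Set.Ioo (0:ℝ) H))) :
    MemLp (Pr H h) 2 (volume.restrict (Set.Ioo (0:ℝ) H)) :=
  memLp_cont (cont_Pr hh)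

lemma Pr_bound {h : ℝ → ℂ} (hh : MemLp h 2 (volume.restrict (Set.Ioo (0:ℝ) H)))
    (t : ℝ) : ‖Pr H h t‖ ≤ ∫ a, ‖h a‖ ∂(volume.restrict (Set.Ioo (0:ℝ) H)) := by
  have hint := integrable_ind hh
  refine (intervalIntegral.norm_integral_le_integral_norm_uIoc).trans ?_
  have h1 : (∫ x in Set.uIoc 0 t, ‖(Set.Ioo (0:ℝ) H).indicator h x‖ ∂volume)
      ≤ ∫ x, ‖(Set.Ioo (0:ℝ) H).indicator h x‖ ∂volume :=
    setIntegral_le_integral hint.norm (ae_of_all _ fun x => norm_nonneg _)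
  refine h1.trans_eq ?_
  rw [← integral_indicator measurableSet_Ioo]
  congr 1
  funext x
  rw [norm_indicator_eq_indicator_norm]

lemma eLpNorm_Pr_le (hH : 0 < H) {h : ℝ → ℂ}
    (hh : MemLp h 2 (volume.restrict (Set.Ioo (0:ℝ) H))) :
    eLpNorm (Pr H h) 2 (volume.restrict (Set.Ioo (0:ℝ) H))
      ≤ ENNReal.ofReal H * eLpNorm h 2 (volume.restrict (Set.Ioo (0:ℝ) H)) := by
  set μ := volume.restrict (Set.Ioo (0:ℝ) H) with hμ
  have hμuniv : μ Set.univ = ENNReal.ofReal H := by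
    rw [hμ, Measure.restrict_apply_univ, Real.volume_Ioo, sub_zero]
  have hint : Integrable h μ := hh.integrable one_le_two
  have h1 : eLpNorm (Pr H h) 2 μ
      ≤ μ Set.univ ^ (2:ℝ≥0∞).toReal⁻¹ * ENNReal.ofReal (∫ a, ‖h a‖ ∂μ) :=
    eLpNorm_le_of_ae_bound (ae_of_all _ (Pr_bound hh))
  have h2 : ENNReal.ofReal (∫ a, ‖h a‖ ∂μ) = eLpNorm h 1 μ := by
    rw [ofReal_integral_norm_eq_lintegral_enorm hint, eLpNorm_one_eq_lintegral_enorm]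
  have h3 : eLpNorm h 1 μ ≤ eLpNorm h 2 μ * μ Set.univ ^ ((1:ℝ)/(1:ℝ≥0∞).toReal - 1/(2:ℝ≥0∞).toReal) :=
    eLpNorm_le_eLpNorm_mul_rpow_measure_univ one_le_two hh.aestronglyMeasurable
  calc eLpNorm (Pr H h) 2 μ
      ≤ μ Set.univ ^ (2:ℝ≥0∞).toReal⁻¹ * ENNReal.ofReal (∫ a, ‖h a‖ ∂μ) := h1
    _ ≤ μ Set.univ ^ (2:ℝ≥0∞).toReal⁻¹ *
        (eLpNorm h 2 μ * μ Set.univ ^ ((1:ℝ)/(1:ℝ≥0∞).toReal - 1/(2:ℝ≥0∞).toReal)) := by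
        rw [h2]; exact mul_le_mul_right h3 _
    _ = ENNReal.ofReal H * eLpNorm h 2 μ := by
        rw [hμuniv]
        have hne : ENNReal.ofReal H ≠ 0 := by
          simp [ENNReal.ofReal_eq_zero, not_le, hH]
        have hnt : ENNReal.ofReal H ≠ ∞ := ENNReal.ofReal_ne_top
        have e1 : ((2:ℝ≥0∞)).toReal⁻¹ = (2:ℝ)⁻¹ := by norm_num
        have e2 : ((1:ℝ)/(1:ℝ≥0∞).toReal - 1/(2:ℝ≥0∞).toReal) = (2:ℝ)⁻¹ := by norm_num
        rw [e1, e2, mul_comm (eLpNorm h 2 μ), ← mul_assoc,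
          ← ENNReal.rpow_add _ _ hne hnt]
        norm_num


lemma norm_toLp_Pr_le (hH : 0 < H) {h : ℝ → ℂ}
    (hh : MemLp h 2 (volume.restrict (Set.Ioo (0:ℝ) H))) :
    ‖(memLp_Pr hh).toLp (Pr H h)‖ ≤ H * ‖hh.toLp h‖ := by
  rw [Lp.norm_toLp, Lp.norm_toLp]
  have h1 := eLpNorm_Pr_le hH hh
  have h2 : ENNReal.ofReal H * eLpNorm h 2 (volume.restrict (Set.Ioo (0:ℝ) H)) ≠ ∞ :=
    ENNReal.mul_ne_top ENNReal.ofReal_ne_top hh.eLpNorm_ne_top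
  refine (ENNReal.toReal_mono h2 h1).trans_eq ?_
  rw [ENNReal.toReal_mul, ENNReal.toReal_ofReal hH.le]

/-- `toLp` of a finite linear combination. -/
lemma toLp_finset_sum {α : Type*} [MeasurableSpace α] {ν : Measure α}
    {ι : Type*} (s : Finset ι) (g : ι → α → ℂ) (hg : ∀ i, MemLp (g i) 2 ν) (b : ι → ℂ)
    (hsum : MemLp (fun t => ∑ i ∈ s, b i * g i t) 2 ν) :
    hsum.toLp _ = ∑ i ∈ s, b i • (hg i).toLp (g i) := by
  classical
  induction s using Finset.induction_on with
  | empty =>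
      have hz : MemLp (0 : α → ℂ) 2 ν := MemLp.zero
      rw [MemLp.toLp_congr hsum hz (ae_of_all _ fun t => by simp), MemLp.toLp_zero,
        Finset.sum_empty]
  | insert a s' hx ih =>
      have h1 : MemLp (fun t => ∑ i ∈ s', b i * g i t) 2 ν := by
        refine memLp_finset_sum s' fun i _ => ?_
        exact ((hg i).const_mul (b i))
      have h2 : MemLp (fun t => b a * g a t) 2 ν := (hg a).const_mul (b a)
      have key : hsum.toLp _ = h2.toLp _ + h1.toLp _ := by
        rw [← MemLp.toLp_add]
        apply MemLp.toLp_congr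
        refine ae_of_all _ fun t => ?_
        simp [Finset.sum_insert hx]
      rw [key, ih h1, Finset.sum_insert hx]
      have h4 : h2.toLp _ = b a • (hg a).toLp (g a) := by
        rw [← MemLp.toLp_const_smul (b a) (hg a)]
        apply MemLp.toLp_congr
        refine ae_of_all _ fun t => ?_
        simp [Pi.smul_apply, smul_eq_mul]
      rw [h4]


/-- Every element of the span of a countable family is a finite `range N` combination. -/
lemma span_rep {M : Type*} [AddCommGroup M] [Module ℂ M] (e : ℕ → M) {D : M}
    (hD : D ∈ Submodule.span ℂ (Set.range e)) :
    ∃ (N : ℕ) (b : ℕ → ℂ), D = ∑ n ∈ Finset.range N, b n • e n := by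
  obtain ⟨c, hc⟩ := Finsupp.mem_span_range_iff_exists_finsupp.mp hD
  refine ⟨c.support.sup id + 1, fun n => c n, ?_⟩
  rw [← hc]
  rw [Finsupp.sum_of_support_subset c ?_ (fun i a => a • e i) (by intros; simp)]
  intro n hn
  simp only [Finset.mem_range]
  exact Nat.lt_succ_of_le (Finset.le_sup (f := id) hn)


lemma coe_sub_toLp {α : Type*} [MeasurableSpace α] {ν : Measure α}
    (u : Lp ℂ 2 ν) {g : α → ℂ} (hg : MemLp g 2 ν) :
    ⇑(u - hg.toLp g) =ᵐ[ν] fun t => u t - g t := by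
  filter_upwards [Lp.coeFn_sub u (hg.toLp g), hg.coeFn_toLp] with t h1 h2
  simp only [h1, Pi.sub_apply, h2]

lemma coe_toLp_sub_toLp {α : Type*} [MeasurableSpace α] {ν : Measure α}
    {f g : α → ℂ} (hf : MemLp f 2 ν) (hg : MemLp g 2 ν) :
    ⇑(hf.toLp f - hg.toLp g) =ᵐ[ν] fun t => f t - g t := by
  filter_upwards [Lp.coeFn_sub (hf.toLp f) (hg.toLp g), hf.coeFn_toLp, hg.coeFn_toLp]
    with t h1 h2 h3
  simp only [h1, Pi.sub_apply, h2, h3]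

end DirichletAux

open DirichletAux

/-- If the constant -1 can be approximated arbitrarily well in L²(0,H) by finite
Dirichlet polynomials ∑ bₙ e^{-iλₙt}, then such Dirichlet polynomials are dense
in L²(0,H). -/
theorem density_from_approx_of_neg_one
    (H : ℝ) (hH : 0 < H)
    (lam : ℕ → ℝ) (hmono : StrictMono lam) (hpos : ∀ n, 0 < lam n)
    (happrox : ∀ ε > (0:ℝ), ∃ (N : ℕ) (b : ℕ → ℂ),
      (∫ t in (0:ℝ)..H,
        ‖(-1 : ℂ) - ∑ n ∈ Finset.range N, b n * Complex.exp (-Complex.I * (lam n) * t)‖ ^ 2)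
        < ε) :
    ∀ (f : Lp ℂ 2 (volume.restrict (Set.Ioo (0:ℝ) H))), ∀ ε > (0:ℝ),
      ∃ (N : ℕ) (b : ℕ → ℂ),
        (∫ t in (0:ℝ)..H,
          ‖f t - ∑ n ∈ Finset.range N, b n * Complex.exp (-Complex.I * (lam n) * t)‖ ^ 2)
          < ε := by
  set μ := volume.restrict (Set.Ioo (0:ℝ) H) with hμdef
  intro f ε hε
  -- the exponentials
  have hce : ∀ n : ℕ, Continuous (fun t : ℝ => Complex.exp (-Complex.I * (lam n) * t)) :=
    fun n => Complex.continuous_exp.comp (continuous_const.mul Complex.continuous_ofReal)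
  have hceL : ∀ n : ℕ, MemLp (fun t : ℝ => Complex.exp (-Complex.I * (lam n) * t)) 2 μ :=
    fun n => memLp_cont (hce n)
  set eL : ℕ → Lp ℂ 2 μ := fun n => (hceL n).toLp _ with heLdef
  set V : Submodule ℂ (Lp ℂ 2 μ) :=
    (Submodule.span ℂ (Set.range eL)).topologicalClosure with hVdef
  have hVcoe : (V : Set (Lp ℂ 2 μ)) = closure (Submodule.span ℂ (Set.range eL) : Set _) := rfl
  -- Dirichlet polynomial functions
  have hdc : ∀ (N : ℕ) (b : ℕ → ℂ),
      Continuous (fun t : ℝ => ∑ n ∈ Finset.range N, b n * Complex.exp (-Complex.I * (lam n) * t)) :=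
    fun N b => continuous_finset_sum _ fun i _ => continuous_const.mul (hce i)
  have hdm : ∀ (N : ℕ) (b : ℕ → ℂ),
      MemLp (fun t : ℝ => ∑ n ∈ Finset.range N, b n * Complex.exp (-Complex.I * (lam n) * t)) 2 μ :=
    fun N b => memLp_cont (hdc N b)
  have hdtoLp : ∀ (N : ℕ) (b : ℕ → ℂ),
      (hdm N b).toLp _ = ∑ n ∈ Finset.range N, b n • eL n :=
    fun N b => toLp_finset_sum (Finset.range N) _ hceL b (hdm N b)
  have hdspan : ∀ (N : ℕ) (b : ℕ → ℂ),
      (hdm N b).toLp _ ∈ Submodule.span ℂ (Set.range eL) := by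
    intro N b
    rw [hdtoLp N b]
    exact Submodule.sum_mem _ fun n _ =>
      Submodule.smul_mem _ _ (Submodule.subset_span ⟨n, rfl⟩)
  -- Step A : the constant function 1 belongs to V
  have honem : MemLp (fun _ : ℝ => (1:ℂ)) 2 μ := memLp_cont continuous_const
  have hnegm : MemLp (fun _ : ℝ => (-1:ℂ)) 2 μ := memLp_cont continuous_const
  have hneg_mem : hnegm.toLp _ ∈ V := by
    rw [← SetLike.mem_coe, hVcoe, Metric.mem_closure_iff]
    intro δ hδ
    obtain ⟨N, b, hNb⟩ := happrox (δ^2) (by positivity)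
    refine ⟨(hdm N b).toLp _, hdspan N b, ?_⟩
    rw [dist_eq_norm]
    have heq := int_norm_sq_eq hH
      (fun t => (-1:ℂ) - ∑ n ∈ Finset.range N, b n * Complex.exp (-Complex.I * (lam n) * t))
      (hnegm.toLp _ - (hdm N b).toLp _) (coe_toLp_sub_toLp hnegm (hdm N b))
    rw [heq] at hNb
    exact lt_of_pow_lt_pow_left₀ 2 hδ.le hNb
  have hone_mem : honem.toLp _ ∈ V := by
    have : honem.toLp _ = -(hnegm.toLp _) := by
      rw [← MemLp.toLp_neg]
      exact MemLp.toLp_congr _ _ (ae_of_all _ fun t => by norm_num)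
    rw [this]
    exact neg_mem hneg_mem
  have hVclosed : IsClosed (V : Set (Lp ℂ 2 μ)) :=
    Submodule.isClosed_topologicalClosure _
  -- removal of the indicator inside the primitive, for points of (0,H)
  have hind : ∀ (g : ℝ → ℂ) (t : ℝ), t ∈ Set.Ioo (0:ℝ) H →
      Pr H g t = ∫ s in (0:ℝ)..t, g s := by
    intro g t ht
    show (∫ s in (0:ℝ)..t, (Set.Ioo (0:ℝ) H).indicator g s) = _
    rw [intervalIntegral.integral_of_le ht.1.le, intervalIntegral.integral_of_le ht.1.le]
    refine setIntegral_congr_fun measurableSet_Ioc fun s hs => ?_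
    have hs' : s ∈ Set.Ioo (0:ℝ) H :=
      ⟨(Set.mem_Ioc.mp hs).1, lt_of_le_of_lt (Set.mem_Ioc.mp hs).2 ht.2⟩
    exact Set.indicator_of_mem hs' g
  -- the primitive of a Dirichlet polynomial lies in V
  have hPrd_mem : ∀ (N : ℕ) (b : ℕ → ℂ),
      (memLp_Pr (hdm N b)).toLp _ ∈ V := by
    intro N b
    have hc : ∀ n : ℕ, (-Complex.I * (lam n) : ℂ) ≠ 0 := fun n =>
      mul_ne_zero (neg_ne_zero.mpr Complex.I_ne_zero)
        (Complex.ofReal_ne_zero.mpr (hpos n).ne')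
    set A : ℕ → ℂ := fun n => b n * (-Complex.I * (lam n))⁻¹ with hA
    have hψ1c : Continuous
        (fun t : ℝ => ∑ n ∈ Finset.range N, A n * Complex.exp (-Complex.I * (lam n) * t)) :=
      hdc N A
    have hψ1m := hdm N A
    have hSm : MemLp (fun _ : ℝ => (∑ n ∈ Finset.range N, A n : ℂ)) 2 μ :=
      memLp_cont continuous_const
    have E1 : Pr H (fun t : ℝ => ∑ n ∈ Finset.range N, b n * Complex.exp (-Complex.I * (lam n) * t))
        =ᵐ[μ] fun t => (∑ n ∈ Finset.range N, A n * Complex.exp (-Complex.I * (lam n) * t))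
          - (∑ n ∈ Finset.range N, A n) := by
      refine (ae_restrict_iff' measurableSet_Ioo).2 (ae_of_all _ fun t ht => ?_)
      show Pr H _ t = (∑ n ∈ Finset.range N, A n * Complex.exp (-Complex.I * (lam n) * t))
        - (∑ n ∈ Finset.range N, A n)
      rw [hind _ t ht]
      rw [intervalIntegral.integral_finset_sum
        (f := fun i s => b i * Complex.exp (-Complex.I * (lam i) * s)) (fun i _ => ((continuous_const.mul (hce i)).intervalIntegrable 0 t))]
      have hterm : ∀ n ∈ Finset.range N,
          (∫ s in (0:ℝ)..t, b n * Complex.exp (-Complex.I * (lam n) * s))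
          = A n * Complex.exp (-Complex.I * (lam n) * t) - A n := by
        intro n _
        rw [intervalIntegral.integral_const_mul, integral_exp_mul_complex (hc n)]
        rw [hA]
        simp only [Complex.ofReal_zero, mul_zero, Complex.exp_zero]
        field_simp
        ring
      rw [Finset.sum_congr rfl hterm, Finset.sum_sub_distrib]
    have hψm : MemLp (fun t : ℝ =>
        (∑ n ∈ Finset.range N, A n * Complex.exp (-Complex.I * (lam n) * t))
          - (∑ n ∈ Finset.range N, A n)) 2 μ := hψ1m.sub hSm
    have hkey : (memLp_Pr (hdm N b)).toLp _
        = hψ1m.toLp _ - (∑ n ∈ Finset.range N, A n) • honem.toLp _ := by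
      have h1 : (memLp_Pr (hdm N b)).toLp _ = hψm.toLp _ :=
        MemLp.toLp_congr (memLp_Pr (hdm N b)) hψm E1
      have h2 : hψm.toLp _ = hψ1m.toLp _ - hSm.toLp _ := by
        rw [← MemLp.toLp_sub]
        exact MemLp.toLp_congr hψm (hψ1m.sub hSm) (ae_of_all _ fun t => rfl)
      have h3 : hSm.toLp _ = (∑ n ∈ Finset.range N, A n) • honem.toLp _ := by
        rw [← MemLp.toLp_const_smul]
        exact MemLp.toLp_congr hSm (honem.const_smul _) (ae_of_all _ fun t => by
          simp [Pi.smul_apply, smul_eq_mul])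
      rw [h1, h2, h3]
    rw [hkey]
    refine sub_mem ?_ (Submodule.smul_mem _ _ hone_mem)
    have := hdtoLp N A
    rw [this]
    exact Submodule.le_topologicalClosure _
      (Submodule.sum_mem _ fun n _ =>
        Submodule.smul_mem _ _ (Submodule.subset_span ⟨n, rfl⟩))
  -- monomials
  have hxm : ∀ k : ℕ, MemLp (fun t : ℝ => (t:ℂ)^k) 2 μ :=
    fun k => memLp_cont (Complex.continuous_ofReal.pow k)
  have hmono_mem : ∀ k : ℕ, (hxm k).toLp _ ∈ V := by
    intro k
    induction k with
    | zero =>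
        have : (hxm 0).toLp _ = honem.toLp _ :=
          MemLp.toLp_congr _ _ (ae_of_all _ fun t => by norm_num)
        rw [this]; exact hone_mem
    | succ k ih =>
        -- the primitive of t^k is t^(k+1)/(k+1)
        have E2 : Pr H (fun t : ℝ => (t:ℂ)^k)
            =ᵐ[μ] fun t : ℝ => ((k:ℂ)+1)⁻¹ * (t:ℂ)^(k+1) := by
          refine (ae_restrict_iff' measurableSet_Ioo).2 (ae_of_all _ fun t ht => ?_)
          show Pr H _ t = ((k:ℂ)+1)⁻¹ * (t:ℂ)^(k+1)
          rw [hind _ t ht]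
          have h1 : (∫ s in (0:ℝ)..t, (s:ℂ)^k) = ∫ s in (0:ℝ)..t, ((s^k : ℝ) : ℂ) := by
            refine intervalIntegral.integral_congr fun s _ => ?_
            push_cast; ring
          have h2 : (∫ s in (0:ℝ)..t, ((s^k : ℝ) : ℂ))
              = ((∫ s in (0:ℝ)..t, s^k : ℝ) : ℂ) := RCLike.intervalIntegral_ofReal
          rw [h1, h2, integral_pow]
          push_cast
          have hk1 : ((k:ℂ)+1) ≠ 0 := by
            exact_mod_cast (Nat.cast_add_one_ne_zero k : ((k:ℂ)+1) ≠ 0)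
          field_simp
          simp
        have hkn : ((k:ℂ)+1) ≠ 0 := Nat.cast_add_one_ne_zero k
        -- (k+1) • primitive of t^k is t^(k+1) in L²
        have hclaim : ((k:ℂ)+1) • (memLp_Pr (hxm k)).toLp _ = (hxm (k+1)).toLp _ := by
          rw [← MemLp.toLp_const_smul]
          refine MemLp.toLp_congr _ _ ?_
          filter_upwards [E2] with t h2
          simp only [Pi.smul_apply, smul_eq_mul, h2]
          field_simp
        suffices hsuf : (hxm (k+1)).toLp _ ∈ closure (V : Set (Lp ℂ 2 μ)) by
          rwa [hVclosed.closure_eq] at hsuf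
        rw [Metric.mem_closure_iff]
        intro δ hδ
        set δ' : ℝ := δ / (((k:ℝ)+1) * (H+1)) with hδ'
        have hδ'pos : 0 < δ' := by
          rw [hδ']; positivity
        have hkmem : (hxm k).toLp _ ∈ closure (Submodule.span ℂ (Set.range eL) : Set _) := by
          rw [← hVcoe]; exact ih
        obtain ⟨D, hDspan, hDdist⟩ := Metric.mem_closure_iff.mp hkmem δ' hδ'pos
        obtain ⟨N, b, rfl⟩ := span_rep eL hDspan
        refine ⟨((k:ℂ)+1) • (memLp_Pr (hdm N b)).toLp _,
          Submodule.smul_mem _ _ (hPrd_mem N b), ?_⟩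
        -- identify the span element with toLp of the Dirichlet polynomial
        have hDd : (∑ n ∈ Finset.range N, b n • eL n) = (hdm N b).toLp _ :=
          (hdtoLp N b).symm
        rw [hDd] at hDdist
        -- difference of primitives
        have hsub : Pr H ((fun t : ℝ => (t:ℂ)^k) -
              (fun t : ℝ => ∑ n ∈ Finset.range N, b n * Complex.exp (-Complex.I * (lam n) * t)))
            = Pr H (fun t : ℝ => (t:ℂ)^k) - Pr H
              (fun t : ℝ => ∑ n ∈ Finset.range N, b n * Complex.exp (-Complex.I * (lam n) * t)) := by
          funext t
          simp only [Pr, Pi.sub_apply]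
          rw [← intervalIntegral.integral_sub
            ((integrable_ind (hxm k)).intervalIntegrable)
            ((integrable_ind (hdm N b)).intervalIntegrable)]
          refine intervalIntegral.integral_congr fun s _ => ?_
          by_cases hs : s ∈ Set.Ioo (0:ℝ) H
          · simp [Set.indicator_of_mem hs]
          · simp [Set.indicator_of_notMem hs]
        have hnorm1 : ‖(memLp_Pr (hxm k)).toLp _ - (memLp_Pr (hdm N b)).toLp _‖
            ≤ H * ‖(hxm k).toLp _ - (hdm N b).toLp _‖ := by
          rw [← MemLp.toLp_sub, ← MemLp.toLp_sub]
          have h1 : ((memLp_Pr (hxm k)).sub (memLp_Pr (hdm N b))).toLp _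
              = (memLp_Pr ((hxm k).sub (hdm N b))).toLp _ := by
            refine MemLp.toLp_congr _ _ (ae_of_all _ fun t => ?_)
            rw [← hsub]
          rw [h1]
          exact norm_toLp_Pr_le hH ((hxm k).sub (hdm N b))
        have hnormk : ‖((k:ℂ)+1)‖ = (k:ℝ)+1 := by
          rw [show ((k:ℂ)+1) = ((k+1:ℕ):ℂ) by push_cast; ring, Complex.norm_natCast]
          push_cast; ring
        rw [dist_eq_norm, ← hclaim, ← smul_sub, norm_smul, hnormk]
        have hfin : ((k:ℝ)+1) * ‖(memLp_Pr (hxm k)).toLp _ - (memLp_Pr (hdm N b)).toLp _‖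
            ≤ ((k:ℝ)+1) * (H * ‖(hxm k).toLp _ - (hdm N b).toLp _‖) := by
          refine mul_le_mul_of_nonneg_left hnorm1 (by positivity)
        refine hfin.trans_lt ?_
        rw [dist_eq_norm] at hDdist
        have hkH : (0:ℝ) < ((k:ℝ)+1) * H := mul_pos (by positivity) hH
        have hmul := mul_lt_mul_of_pos_left hDdist hkH
        have e2 : δ = ((k:ℝ)+1) * H * δ' + ((k:ℝ)+1) * δ' := by
          rw [hδ']; field_simp
        have h3 : (0:ℝ) < ((k:ℝ)+1) * δ' := mul_pos (by positivity) hδ'pos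
        linarith [hmul, e2, h3]
  -- Step C : polynomial functions lie in V
  have hpolm : ∀ P : Polynomial ℂ, MemLp (fun t : ℝ => P.eval (t:ℂ)) 2 μ :=
    fun P => memLp_cont (P.continuous.comp Complex.continuous_ofReal)
  have hpol_mem : ∀ P : Polynomial ℂ, (hpolm P).toLp _ ∈ V := by
    intro P
    have hsum : MemLp
        (fun t : ℝ => ∑ i ∈ Finset.range (P.natDegree+1), P.coeff i * (t:ℂ)^i) 2 μ :=
      memLp_cont (continuous_finset_sum _ fun i _ =>
        continuous_const.mul (Complex.continuous_ofReal.pow i))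
    have h0 : (hpolm P).toLp _ = hsum.toLp _ :=
      MemLp.toLp_congr (hpolm P) hsum (ae_of_all _ fun t => by
        simp only [Polynomial.eval_eq_sum_range])
    rw [h0, toLp_finset_sum (Finset.range (P.natDegree+1)) _ hxm (fun i => P.coeff i) hsum]
    exact Submodule.sum_mem _ fun i _ => Submodule.smul_mem _ _ (hmono_mem i)
  -- Step D : final approximation
  set ε' : ℝ := Real.sqrt ε with hε'def
  have hε' : 0 < ε' := Real.sqrt_pos.mpr hε
  haveI : μ.WeaklyRegular := by
    rw [hμdef]
    exact MeasureTheory.Measure.WeaklyRegular.restrict_of_measure_ne_top (by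
      rw [Real.volume_Ioo]; exact ENNReal.ofReal_ne_top)
  obtain ⟨g, hgdist, hgm⟩ := (Lp.memLp f).exists_boundedContinuous_eLpNorm_sub_le
    (by norm_num : (2:ℝ≥0∞) ≠ ∞)
    (ne_of_gt (ENNReal.ofReal_pos.mpr (by positivity : (0:ℝ) < ε'/4)))
  have hfg : ‖f - hgm.toLp _‖ ≤ ε'/4 := by
    rw [Lp.norm_def]
    have hcongr : eLpNorm (⇑(f - hgm.toLp _)) 2 μ = eLpNorm (⇑f - ⇑g) 2 μ := by
      apply eLpNorm_congr_ae
      filter_upwards [Lp.coeFn_sub f (hgm.toLp _), hgm.coeFn_toLp] with t h1 h2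
      simp only [h1, Pi.sub_apply, h2]
    rw [hcongr]
    refine (ENNReal.toReal_mono ENNReal.ofReal_ne_top hgdist).trans_eq ?_
    rw [ENNReal.toReal_ofReal (by positivity)]
  -- Weierstrass approximation of g
  set δ : ℝ := ε' / (16 * (Real.sqrt H + 1)) with hδdef
  have hδpos : 0 < δ := by
    rw [hδdef]
    have := Real.sqrt_nonneg H
    positivity
  set fr : C(Set.Icc (0:ℝ) H, ℝ) :=
    ⟨fun x => (g x).re, Complex.continuous_re.comp (g.continuous.comp continuous_subtype_val)⟩
    with hfrdef
  set fi : C(Set.Icc (0:ℝ) H, ℝ) :=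
    ⟨fun x => (g x).im, Complex.continuous_im.comp (g.continuous.comp continuous_subtype_val)⟩
    with hfidef
  obtain ⟨p, hp⟩ := exists_polynomial_near_continuousMap 0 H fr δ hδpos
  obtain ⟨q, hq⟩ := exists_polynomial_near_continuousMap 0 H fi δ hδpos
  set P : Polynomial ℂ := p.map Complex.ofRealHom + Polynomial.C Complex.I * q.map Complex.ofRealHom
    with hPdef
  have hmapeval : ∀ (r : Polynomial ℝ) (t : ℝ),
      (r.map Complex.ofRealHom).eval (t:ℂ) = ((r.eval t : ℝ) : ℂ) := by
    intro r t
    rw [Polynomial.eval_map, show ((t:ℝ):ℂ) = Complex.ofRealHom t from rfl,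
      Polynomial.eval₂_at_apply]
    rfl
  have hPeval : ∀ t : ℝ, P.eval (t:ℂ)
      = ((p.eval t : ℝ) : ℂ) + Complex.I * ((q.eval t : ℝ) : ℂ) := by
    intro t
    rw [hPdef]
    simp only [Polynomial.eval_add, Polynomial.eval_mul, Polynomial.eval_C,
      hmapeval p t, hmapeval q t]
  have hgP : ∀ t ∈ Set.Icc (0:ℝ) H, ‖g t - P.eval (t:ℂ)‖ ≤ 2*δ := by
    intro t ht
    have h1 : |(g t).re - p.eval t| ≤ δ := by
      have h := (ContinuousMap.norm_coe_le_norm (p.toContinuousMapOn _ - fr) ⟨t, ht⟩).trans hp.le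
      rw [ContinuousMap.sub_apply] at h
      have : |p.eval t - (g t).re| ≤ δ := h
      rwa [abs_sub_comm] at this
    have h2 : |(g t).im - q.eval t| ≤ δ := by
      have h := (ContinuousMap.norm_coe_le_norm (q.toContinuousMapOn _ - fi) ⟨t, ht⟩).trans hq.le
      rw [ContinuousMap.sub_apply] at h
      have : |q.eval t - (g t).im| ≤ δ := h
      rwa [abs_sub_comm] at this
    have hre : (g t - P.eval (t:ℂ)).re = (g t).re - p.eval t := by
      rw [hPeval]; simp
    have him : (g t - P.eval (t:ℂ)).im = (g t).im - q.eval t := by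
      rw [hPeval]; simp
    calc ‖g t - P.eval (t:ℂ)‖
        ≤ |(g t - P.eval (t:ℂ)).re| + |(g t - P.eval (t:ℂ)).im| :=
          Complex.norm_le_abs_re_add_abs_im _
      _ = |(g t).re - p.eval t| + |(g t).im - q.eval t| := by rw [hre, him]
      _ ≤ δ + δ := add_le_add h1 h2
      _ = 2*δ := by ring
  have hgPlp : ‖hgm.toLp _ - (hpolm P).toLp _‖ ≤ Real.sqrt H * (2*δ) := by
    rw [← MemLp.toLp_sub, Lp.norm_toLp]
    have hb : eLpNorm (⇑g - fun t : ℝ => P.eval (t:ℂ)) 2 μ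
        ≤ μ Set.univ ^ (2:ℝ≥0∞).toReal⁻¹ * ENNReal.ofReal (2*δ) := by
      refine eLpNorm_le_of_ae_bound ?_
      rw [hμdef]
      refine (ae_restrict_iff' measurableSet_Ioo).2 (ae_of_all _ fun t ht => ?_)
      exact hgP t (Set.Ioo_subset_Icc_self ht)
    have hfin : μ Set.univ ^ (2:ℝ≥0∞).toReal⁻¹ * ENNReal.ofReal (2*δ) ≠ ∞ := by
      refine ENNReal.mul_ne_top ?_ ENNReal.ofReal_ne_top
      refine ENNReal.rpow_ne_top_of_nonneg (by norm_num) ?_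
      rw [hμdef, Measure.restrict_apply_univ, Real.volume_Ioo]
      exact ENNReal.ofReal_ne_top
    refine (ENNReal.toReal_mono hfin hb).trans_eq ?_
    rw [ENNReal.toReal_mul, ← ENNReal.toReal_rpow, hμdef, Measure.restrict_apply_univ,
      Real.volume_Ioo, sub_zero, ENNReal.toReal_ofReal hH.le,
      ENNReal.toReal_ofReal (by positivity)]
    congr 1
    rw [Real.sqrt_eq_rpow]
    norm_num
  have hδbound : Real.sqrt H * (2*δ) ≤ ε'/8 := by
    have hs : 0 ≤ Real.sqrt H := Real.sqrt_nonneg H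
    have e3 : δ * (16*(Real.sqrt H + 1)) = ε' := by
      rw [hδdef]; field_simp
    nlinarith [hδpos.le, hs]
  have htri1 : ‖f - (hpolm P).toLp _‖ < ε'/2 := by
    have h := dist_triangle f (hgm.toLp _) ((hpolm P).toLp _)
    rw [dist_eq_norm, dist_eq_norm, dist_eq_norm] at h
    have := hgPlp.trans hδbound
    calc ‖f - (hpolm P).toLp _‖ ≤ ‖f - hgm.toLp _‖ + ‖hgm.toLp _ - (hpolm P).toLp _‖ := h
      _ ≤ ε'/4 + ε'/8 := add_le_add hfg this
      _ < ε'/2 := by linarith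
  have hPc : (hpolm P).toLp _ ∈ closure (Submodule.span ℂ (Set.range eL) : Set _) := by
    rw [← hVcoe]; exact hpol_mem P
  obtain ⟨D, hDspan, hDd⟩ := Metric.mem_closure_iff.mp hPc (ε'/2) (by positivity)
  obtain ⟨N, b, rfl⟩ := span_rep eL hDspan
  refine ⟨N, b, ?_⟩
  rw [(hdtoLp N b).symm] at hDd  -- replace the span sum by toLp of the Dirichlet polynomial
  rw [dist_eq_norm] at hDd
  have hfinal : ‖f - (hdm N b).toLp _‖ < ε' := by
    have h := dist_triangle f ((hpolm P).toLp _) ((hdm N b).toLp _)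
    rw [dist_eq_norm, dist_eq_norm, dist_eq_norm] at h
    calc ‖f - (hdm N b).toLp _‖
        ≤ ‖f - (hpolm P).toLp _‖ + ‖(hpolm P).toLp _ - (hdm N b).toLp _‖ := h
      _ < ε'/2 + ε'/2 := add_lt_add htri1 hDd
      _ = ε' := by ring
  have heq := int_norm_sq_eq hH
    (fun t => f t - ∑ n ∈ Finset.range N, b n * Complex.exp (-Complex.I * (lam n) * t))
    (f - (hdm N b).toLp _) (coe_sub_toLp f (hdm N b))
  rw [heq]
  have : ‖f - (hdm N b).toLp _‖ ^ 2 < ε' ^ 2 := by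
    have hnn : 0 ≤ ‖f - (hdm N b).toLp _‖ := norm_nonneg _
    exact pow_lt_pow_left₀ hfinal hnn (by norm_num)
  refine this.trans_le ?_
  rw [hε'def, Real.sq_sqrt hε.le]
end

section
/- (Pechersky rearrangement theorem, first part) Let X be a complex Hilbert space and (x_n)_{n\ge 1} a sequence in X such that \sum_{n\ge 1} |\langle x_n, x \rangle| = \infty for every nonzero x \in X. Then the set of finite sums { \sum_{n=1}^m a_n x_n : m \ge 1, a_n \in \mathbb{C}, |a_n| \le 1 } is dense in X. -/
open Filter

/-- Pechersky rearrangement theorem, first part: if ∑ |⟨xₙ, x⟩| diverges for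
every nonzero x in a complex Hilbert space, then the finite sums ∑ aₙ xₙ with
|aₙ| ≤ 1 are dense. -/
theorem pechersky_first_part
    {X : Type*} [NormedAddCommGroup X] [InnerProductSpace ℂ X] [CompleteSpace X]
    (x : ℕ → X)
    (hdiv : ∀ y : X, y ≠ 0 → ¬ Summable (fun n => ‖(inner ℂ (x n) y : ℂ)‖)) :
    Dense {v : X | ∃ (m : ℕ) (a : ℕ → ℂ), (∀ n, ‖a n‖ ≤ 1) ∧
      v = ∑ n ∈ Finset.range m, a n • x n} := by
  letI : InnerProductSpace ℝ X := InnerProductSpace.rclikeToReal ℂ X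
  set S : Set X := {v : X | ∃ (m : ℕ) (a : ℕ → ℂ), (∀ n, ‖a n‖ ≤ 1) ∧
      v = ∑ n ∈ Finset.range m, a n • x n} with hSdef
  -- S is convex
  have key : ∀ (m₁ m₂ : ℕ) (a : ℕ → ℂ), m₁ ≤ m₂ → (∀ n, m₁ ≤ n → a n = 0) →
      ∑ n ∈ Finset.range m₁, a n • x n = ∑ n ∈ Finset.range m₂, a n • x n := by
    intro m₁ m₂ a h ha
    refine Finset.sum_subset (Finset.range_subset_range.2 h) ?_
    intro n _ hn
    rw [ha n (by simpa using hn), zero_smul]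
  have hconv : Convex ℝ S := by
    rintro v ⟨m₁, a, ha, rfl⟩ w ⟨m₂, b, hb, rfl⟩ t s ht hs hts
    set a' : ℕ → ℂ := fun n => if n < m₁ then a n else 0 with ha'
    set b' : ℕ → ℂ := fun n => if n < m₂ then b n else 0 with hb'
    refine ⟨max m₁ m₂, fun n => (t : ℂ) * a' n + (s : ℂ) * b' n, ?_, ?_⟩
    · intro n
      have h1 : ‖a' n‖ ≤ 1 := by
        simp only [ha']; split
        · exact ha n
        · simp
      have h2 : ‖b' n‖ ≤ 1 := by
        simp only [hb']; split
        · exact hb n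
        · simp
      calc ‖(t : ℂ) * a' n + (s : ℂ) * b' n‖ ≤ ‖(t : ℂ) * a' n‖ + ‖(s : ℂ) * b' n‖ :=
            norm_add_le _ _
        _ = t * ‖a' n‖ + s * ‖b' n‖ := by
            rw [norm_mul, norm_mul, Complex.norm_real, Complex.norm_real,
              Real.norm_of_nonneg ht, Real.norm_of_nonneg hs]
        _ ≤ t * 1 + s * 1 := by gcongr
        _ = 1 := by linarith
    · have e1 : ∑ n ∈ Finset.range m₁, a n • x n = ∑ n ∈ Finset.range (max m₁ m₂), a' n • x n := by
        rw [← key m₁ (max m₁ m₂) a' (le_max_left _ _) (fun n hn => by simp [ha', not_lt.2 hn])]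
        exact Finset.sum_congr rfl fun n hn => by
          simp [ha', Finset.mem_range.1 hn]
      have e2 : ∑ n ∈ Finset.range m₂, b n • x n = ∑ n ∈ Finset.range (max m₁ m₂), b' n • x n := by
        rw [← key m₂ (max m₁ m₂) b' (le_max_right _ _) (fun n hn => by simp [hb', not_lt.2 hn])]
        exact Finset.sum_congr rfl fun n hn => by
          simp [hb', Finset.mem_range.1 hn]
      rw [e1, e2, Finset.smul_sum, Finset.smul_sum, ← Finset.sum_add_distrib]
      refine Finset.sum_congr rfl fun n _ => ?_
      rw [add_smul, mul_smul, mul_smul, Complex.coe_smul, Complex.coe_smul]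
  -- by contradiction
  by_contra hdense
  obtain ⟨p, hp⟩ : ∃ p, p ∉ closure S := by
    by_contra h; push_neg at h; exact hdense h
  have hKconv : Convex ℝ (closure S) := hconv.closure
  have hKne : (closure S).Nonempty :=
    ⟨0, subset_closure ⟨0, fun _ => 0, by simp, by simp⟩⟩
  have hKcomp : IsComplete (closure S) := isClosed_closure.isComplete
  obtain ⟨q, hqK, hq⟩ := exists_norm_eq_iInf_of_complete_convex hKne hKcomp hKconv p
  have hsep := (norm_eq_iInf_iff_real_inner_le_zero hKconv hqK).1 hq
  have hy : p - q ≠ 0 := sub_ne_zero.2 (fun h => hp (h ▸ hqK))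
  set y : X := p - q with hydef
  have hbound : ∀ w ∈ S, Complex.re (inner ℂ y w : ℂ) ≤ Complex.re (inner ℂ y q : ℂ) := by
    intro w hw
    have h2 : Complex.re ((inner ℂ y (w - q) : ℂ)) ≤ 0 := hsep w (subset_closure hw)
    rw [inner_sub_right, Complex.sub_re] at h2
    linarith
  set z : ℕ → ℂ := fun n => inner ℂ y (x n) with hzdef
  set a : ℕ → ℂ := fun n => if z n = 0 then 1 else (starRingEnd ℂ) (z n) / ‖z n‖ with hadef
  have ha : ∀ n, ‖a n‖ ≤ 1 := by
    intro n
    simp only [hadef]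
    split
    · simp
    · rename_i h
      rw [norm_div, RCLike.norm_conj, Complex.norm_real, Real.norm_of_nonneg (norm_nonneg _),
        div_self (norm_ne_zero_iff.2 h)]
  have haz : ∀ n, a n * z n = (‖z n‖ : ℂ) := by
    intro n
    simp only [hadef]
    split
    · rename_i h; simp [h]
    · rename_i h
      have hne : ((‖z n‖ : ℝ) : ℂ) ≠ 0 := by
        simpa using norm_ne_zero_iff.2 h
      have h3 : ((‖z n‖ : ℝ) : ℂ) ≠ 0 := by
        exact hne
      rw [div_mul_eq_mul_div, RCLike.conj_mul, sq, mul_div_assoc]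
      norm_num [div_self h3]
  have hps : ∀ m, ∑ n ∈ Finset.range m, ‖z n‖ ≤ Complex.re (inner ℂ y q : ℂ) := by
    intro m
    have hmem : (∑ n ∈ Finset.range m, a n • x n) ∈ S := ⟨m, a, ha, rfl⟩
    have hb := hbound _ hmem
    rw [inner_sum] at hb
    simp only [inner_smul_right, show ∀ n, inner ℂ y (x n) = z n from fun n => rfl, haz] at hb
    rw [Complex.re_sum] at hb
    simpa using hb
  have hsum : Summable (fun n => ‖z n‖) :=
    summable_of_sum_range_le (fun n => norm_nonneg _) hps
  refine hdiv y hy ?_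
  have heq : (fun n => ‖(inner ℂ (x n) y : ℂ)‖) = fun n => ‖z n‖ := by
    funext n
    rw [hzdef, ← inner_conj_symm, RCLike.norm_conj]
  rw [heq]
  exact hsum
end
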